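/- arXiv:1311.3726 — 4 statements merged into one kernel-verified Lean document; each statement's English description precedes it below -/
import Mathlib

section
/- Let p ∈ ℝ[x] with deg p ≤ d. For every feasible point z of program (lw) for p, the polynomial p − p(0) + v(z) is a sum of squares of binomials in ℝ[x] (i.e., a sum of squares of polynomials each having at most two terms); in particular p(x̄) ≥ p(0) − v(z) for all x̄ ∈ ℝⁿ, and hence p_gp = p(0) − ρ(p) is a lower bound for p on ℝⁿ. -/
open MvPolynomial Finset
noncomputable section
section GMAux
variable {n : ℕ}



/-- Sum of squares of binomials. -/
def BSOS (p : MvPolynomial (Fin n) ℝ) : Prop :=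
  ∃ (k : ℕ) (q : Fin k → MvPolynomial (Fin n) ℝ),
    (∀ t, (q t).support.card ≤ 2) ∧ p = ∑ t, q t ^ 2

lemma bsos_zero : BSOS (0 : MvPolynomial (Fin n) ℝ) :=
  ⟨0, fun t => 0, fun t => by simp, by simp⟩

lemma bsos_sq {q : MvPolynomial (Fin n) ℝ} (h : q.support.card ≤ 2) : BSOS (q ^ 2) :=
  ⟨1, fun _ => q, fun _ => h, by simp⟩

lemma bsos_add {p q : MvPolynomial (Fin n) ℝ} (hp : BSOS p) (hq : BSOS q) :
    BSOS (p + q) := by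
  obtain ⟨k1, q1, h1, e1⟩ := hp
  obtain ⟨k2, q2, h2, e2⟩ := hq
  refine ⟨k1 + k2, Fin.addCases q1 q2, ?_, ?_⟩
  · intro t
    refine Fin.addCases (fun i => ?_) (fun i => ?_) t <;> simp [h1, h2]
  · rw [e1, e2, Fin.sum_univ_add]
    simp

lemma bsos_finsum {ι : Type*} (s : Finset ι) (f : ι → MvPolynomial (Fin n) ℝ)
    (h : ∀ i ∈ s, BSOS (f i)) : BSOS (∑ i ∈ s, f i) := by
  classical
  induction s using Finset.induction with
  | empty => simpa using bsos_zero
  | insert _ _ hx ih =>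
    rw [Finset.sum_insert hx]
    exact bsos_add (h _ (Finset.mem_insert_self _ _))
      (ih fun i hi => h i (Finset.mem_insert_of_mem hi))

lemma bsos_smul {c : ℝ} (hc : 0 ≤ c) {p : MvPolynomial (Fin n) ℝ} (hp : BSOS p) :
    BSOS (c • p) := by
  obtain ⟨k, q, h, e⟩ := hp
  refine ⟨k, fun t => Real.sqrt c • q t, fun t => ?_, ?_⟩
  · exact le_trans (Finset.card_le_card (MvPolynomial.support_smul)) (h t)
  · rw [e, Finset.smul_sum]
    refine Finset.sum_congr rfl fun t _ => ?_
    rw [smul_pow, Real.sq_sqrt hc]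

lemma card_support_mul {p q : MvPolynomial (Fin n) ℝ} :
    (p * q).support.card ≤ p.support.card * q.support.card := by
  classical
  exact le_trans (Finset.card_le_card (MvPolynomial.support_mul p q)) Finset.card_add_le

lemma bsos_mul_sq {μ p : MvPolynomial (Fin n) ℝ} (hμ : μ.support.card ≤ 1)
    (hp : BSOS p) : BSOS (μ ^ 2 * p) := by
  obtain ⟨k, q, h, e⟩ := hp
  refine ⟨k, fun t => μ * q t, fun t => ?_, ?_⟩
  · calc (μ * q t).support.card ≤ μ.support.card * (q t).support.card := card_support_mul
    _ ≤ 1 * 2 := Nat.mul_le_mul hμ (h t)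
    _ = 2 := by norm_num
  · rw [e, Finset.mul_sum]
    refine Finset.sum_congr rfl fun t _ => ?_
    ring

lemma card_support_monomial_le {s : Fin n →₀ ℕ} {a : ℝ} :
    ((monomial s a : MvPolynomial (Fin n) ℝ)).support.card ≤ 1 := by
  classical
  rw [MvPolynomial.support_monomial]
  split <;> simp

lemma card_support_prod {ι : Type*} (s : Finset ι) (f : ι → MvPolynomial (Fin n) ℝ)
    (h : ∀ i ∈ s, (f i).support.card ≤ 1) : (∏ i ∈ s, f i).support.card ≤ 1 := by
  classical
  induction s using Finset.induction with
  | empty =>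
    rw [Finset.prod_empty, ← MvPolynomial.C_1, MvPolynomial.C_apply]
    exact card_support_monomial_le
  | insert _ _ hx ih =>
    rw [Finset.prod_insert hx]
    calc _ ≤ _ := card_support_mul
    _ ≤ 1 * 1 := Nat.mul_le_mul (h _ (Finset.mem_insert_self _ _))
        (ih fun i hi => h i (Finset.mem_insert_of_mem hi))
    _ = 1 := by norm_num




lemma card_support_pow {p : MvPolynomial (Fin n) ℝ} (h : p.support.card ≤ 1) (t : ℕ) :
    (p ^ t).support.card ≤ 1 := by
  induction t with
  | zero =>
    rw [pow_zero, ← MvPolynomial.C_1, MvPolynomial.C_apply]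
    exact card_support_monomial_le
  | succ t ih =>
    rw [pow_succ]
    exact le_trans card_support_mul (le_trans (Nat.mul_le_mul ih h) (by norm_num))

/-- half of an even multi-index -/
def halfF (β : Fin n →₀ ℕ) : Fin n →₀ ℕ := Finsupp.mapRange (· / 2) (by norm_num) β

lemma halfF_add_self {β : Fin n →₀ ℕ} (h : ∀ i, Even (β i)) : halfF β + halfF β = β := by
  ext i
  obtain ⟨k, hk⟩ := h i
  simp [halfF, hk]
  omega

lemma monomial_eq_sq {β : Fin n →₀ ℕ} {c : ℝ} (hc : 0 ≤ c) (hev : ∀ i, Even (β i)) :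
    (monomial β c : MvPolynomial (Fin n) ℝ) = (monomial (halfF β) (Real.sqrt c)) ^ 2 := by
  rw [sq, monomial_mul, halfF_add_self hev, Real.mul_self_sqrt hc]

lemma isSquare_monomial_iff {β : Fin n →₀ ℕ} {c : ℝ} (hc : c ≠ 0)
    (h : IsSquare (monomial β c : MvPolynomial (Fin n) ℝ)) : 0 < c ∧ ∀ i, Even (β i) := by
  obtain ⟨r, hr⟩ := h
  have hev : ∀ x : Fin n → ℝ, c * ∏ i, x i ^ β i = (eval x r) ^ 2 := by
    intro x
    have := congrArg (eval x) hr
    rw [eval_monomial] at this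
    rw [Finsupp.prod_fintype _ _ (fun i => pow_zero _)] at this
    rw [this, map_mul]; ring
  have h1 : 0 < c := by
    have := hev (fun _ => 1)
    simp at this
    rcases lt_or_ge 0 c with h | h
    · exact h
    · exfalso
      have hc2 : c < 0 := lt_of_le_of_ne h hc
      nlinarith [sq_nonneg (eval (fun _ => (1:ℝ)) r), this]
  refine ⟨h1, fun i => ?_⟩
  by_contra hodd
  rw [Nat.not_even_iff_odd] at hodd
  have := hev (fun j => if j = i then (-1 : ℝ) else 1)
  have hprod : ∏ j, (if j = i then (-1:ℝ) else 1) ^ β j = -1 := by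
    rw [Finset.prod_eq_single i]
    · simp [hodd.neg_one_pow]
    · intro j _ hj; simp [hj]
    · simp
  rw [hprod] at this
  nlinarith [sq_nonneg (eval (fun j => if j = i then (-1:ℝ) else 1) r)]

section flip

/-- the sign flip `x_{i₀} ↦ -x_{i₀}` -/
def flipHom (i₀ : Fin n) : MvPolynomial (Fin n) ℝ →ₐ[ℝ] MvPolynomial (Fin n) ℝ :=
  aeval (fun j : Fin n => if j = i₀ then (-X j) else X j)

lemma flipHom_monomial (β : Fin n →₀ ℕ) (c : ℝ) :
    flipHom i₀ (monomial β c) = monomial β ((-1) ^ (β i₀) * c) := by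
  rw [flipHom, aeval_monomial, monomial_eq]
  rw [Finsupp.prod_fintype _ _ (fun i => pow_zero _),
    Finsupp.prod_fintype _ _ (fun i => pow_zero _)]
  rw [Finset.prod_eq_mul_prod_sdiff_singleton_of_mem (Finset.mem_univ i₀),
    Finset.prod_eq_mul_prod_sdiff_singleton_of_mem (Finset.mem_univ i₀)
      (fun i => (X i : MvPolynomial (Fin n) ℝ) ^ β i)]
  have h1 : (if i₀ = i₀ then (-X i₀ : MvPolynomial (Fin n) ℝ) else X i₀) ^ β i₀
      = (-1) ^ β i₀ * (X i₀) ^ β i₀ := by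
    rw [if_pos rfl, neg_pow]
  have h2 : ∏ i ∈ Finset.univ \ {i₀}, (if i = i₀ then (-X i : MvPolynomial (Fin n) ℝ) else X i) ^ β i
      = ∏ i ∈ Finset.univ \ {i₀}, (X i : MvPolynomial (Fin n) ℝ) ^ β i := by
    refine Finset.prod_congr rfl fun i hi => ?_
    rw [if_neg (by simp at hi; exact hi)]
  rw [h1, h2]
  have h3 : ((-1 : ℝ) ^ β i₀ * c) = ((-1) ^ β i₀ * c) := rfl
  rw [map_mul, map_pow, map_neg, map_one]
  simp only [algebraMap_eq]
  ring
end flip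



lemma flipHom_support (i₀ : Fin n) (q : MvPolynomial (Fin n) ℝ) :
    (flipHom i₀ q).support ⊆ q.support := by
  classical
  conv_lhs => rw [q.as_sum]
  rw [map_sum]
  refine le_trans MvPolynomial.support_sum ?_
  intro β hβ
  rw [Finset.mem_biUnion] at hβ
  obtain ⟨γ, hγ, hβ2⟩ := hβ
  rw [flipHom_monomial] at hβ2
  have := MvPolynomial.support_monomial_subset hβ2
  simp at this
  rwa [this]

lemma bsos_flip (i₀ : Fin n) {p : MvPolynomial (Fin n) ℝ} (hp : BSOS p) :
    BSOS (flipHom i₀ p) := by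
  obtain ⟨k, q, h, e⟩ := hp
  refine ⟨k, fun t => flipHom i₀ (q t), fun t => ?_, ?_⟩
  · exact le_trans (Finset.card_le_card (flipHom_support i₀ (q t))) (h t)
  · rw [e, map_sum]
    exact Finset.sum_congr rfl fun t _ => map_pow _ _ _




/-- Hurwitz-style AM-GM with squared arguments is a sum of binomial squares. -/
lemma bsos_amgm_sq : ∀ (N : ℕ) (μ : Fin N → MvPolynomial (Fin n) ℝ),
    (∀ j, (μ j).support.card ≤ 1) →
    BSOS (∑ j, (μ j ^ 2) ^ N - (N : MvPolynomial (Fin n) ℝ) * ∏ j, μ j ^ 2) := by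
  intro N
  induction N with
  | zero => intro μ hμ; simpa using bsos_zero
  | succ m ih =>
    intro μ hμ
    rcases Nat.eq_zero_or_pos m with hm | hm
    · subst hm
      simpa [Fin.sum_univ_one, Fin.prod_univ_one] using bsos_zero
    -- main case : m ≥ 1
    · set x : Fin (m+1) → MvPolynomial (Fin n) ℝ := fun j => μ j ^ 2 with hxdef
      set P : MvPolynomial (Fin n) ℝ := ∏ j, x j with hP
      set S1 : MvPolynomial (Fin n) ℝ := ∑ j, x j with hS1
      set Sm : MvPolynomial (Fin n) ℝ := ∑ j, x j ^ m with hSm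
      set SN : MvPolynomial (Fin n) ℝ := ∑ j, x j ^ (m+1) with hSN
      set T : Fin (m+1) → MvPolynomial (Fin n) ℝ := fun i =>
        ∑ j : Fin m, x (i.succAbove j) ^ m
          - (m : MvPolynomial (Fin n) ℝ) * ∏ j : Fin m, x (i.succAbove j) with hT
      -- the two expansion identities
      have e1 : ∑ i, ∑ k, (x i - x k) * (x i ^ m - x k ^ m)
          = (2 * ((m : MvPolynomial (Fin n) ℝ) + 1)) * SN - 2 * (S1 * Sm) := by
        have inner : ∀ i, ∑ k, (x i - x k) * (x i ^ m - x k ^ m)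
            = ((m : MvPolynomial (Fin n) ℝ) + 1) * x i ^ (m+1) + SN
              - (x i * Sm + x i ^ m * S1) := by
          intro i
          have : ∀ k, (x i - x k) * (x i ^ m - x k ^ m)
              = x i ^ (m+1) + x k ^ (m+1) - (x i * x k ^ m + x i ^ m * x k) := by
            intro k; ring
          rw [Finset.sum_congr rfl fun k _ => this k]
          simp only [Finset.sum_sub_distrib, Finset.sum_add_distrib, Finset.sum_const,
            card_univ, Fintype.card_fin, ← Finset.mul_sum, nsmul_eq_mul]
          push_cast
          ring
        rw [Finset.sum_congr rfl fun i _ => inner i]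
        simp only [Finset.sum_sub_distrib, Finset.sum_add_distrib, Finset.sum_const,
          card_univ, Fintype.card_fin, ← Finset.mul_sum, ← Finset.sum_mul, nsmul_eq_mul]
        push_cast
        ring
      have e2 : ∑ i, x i * T i
          = S1 * Sm - SN - ((m : MvPolynomial (Fin n) ℝ) + 1) * ((m : MvPolynomial (Fin n) ℝ) * P) := by
        have hTi : ∀ i, x i * T i
            = x i * Sm - x i ^ (m+1) - (m : MvPolynomial (Fin n) ℝ) * P := by
          intro i
          have h1 : ∑ j : Fin m, x (i.succAbove j) ^ m = Sm - x i ^ m := by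
            rw [hSm, Fin.sum_univ_succAbove (fun k => x k ^ m) i]; ring
          have h2 : x i * ∏ j : Fin m, x (i.succAbove j) = P := by
            rw [hP, Fin.prod_univ_succAbove x i]
          rw [hT]
          simp only []
          rw [h1, mul_sub, mul_sub, ← mul_assoc, mul_comm (x i) (m : MvPolynomial (Fin n) ℝ),
            mul_assoc, h2]
          ring
        rw [Finset.sum_congr rfl fun i _ => hTi i]
        simp only [Finset.sum_sub_distrib, Finset.sum_const, card_univ, Fintype.card_fin,
          ← Finset.sum_mul, nsmul_eq_mul]
        push_cast
        ring
      -- main identity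
      have hId : ((2 * m : ℕ) : MvPolynomial (Fin n) ℝ)
            * (∑ j, (μ j ^ 2) ^ (m+1) - ((m+1 : ℕ) : MvPolynomial (Fin n) ℝ) * ∏ j, μ j ^ 2)
          = (∑ i, ∑ k, (x i - x k) * (x i ^ m - x k ^ m)) + 2 * ∑ i, x i * T i := by
        rw [e1, e2]
        have : ∑ j, (μ j ^ 2) ^ (m+1) = SN := rfl
        rw [this]
        have : (∏ j, μ j ^ 2) = P := rfl
        rw [this]
        push_cast
        ring
      -- BSOS of the right-hand side
      have hRHS : BSOS ((∑ i, ∑ k, (x i - x k) * (x i ^ m - x k ^ m)) + 2 * ∑ i, x i * T i) := by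
        apply bsos_add
        · apply bsos_finsum
          intro i _
          apply bsos_finsum
          intro k _
          -- (x i - x k) * (x i ^ m - x k ^ m) = ∑_{t<m} ((μ i^2 - μ k^2) * μ i ^ t * μ k ^ (m-1-t))^2
          have hgeo : x i ^ m - x k ^ m
              = (∑ t ∈ Finset.range m, x i ^ t * x k ^ (m - 1 - t)) * (x i - x k) :=
            (geom_sum₂_mul (x i) (x k) m).symm
          have : (x i - x k) * (x i ^ m - x k ^ m)
              = ∑ t ∈ Finset.range m, ((μ i ^ 2 - μ k ^ 2) * (μ i ^ t * μ k ^ (m - 1 - t))) ^ 2 := by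
            rw [hgeo]
            rw [Finset.sum_mul, Finset.mul_sum]
            refine Finset.sum_congr rfl fun t _ => ?_
            rw [hxdef]
            simp only []
            ring
          rw [this]
          apply bsos_finsum
          intro t _
          apply bsos_sq
          calc ((μ i ^ 2 - μ k ^ 2) * (μ i ^ t * μ k ^ (m - 1 - t))).support.card
              ≤ (μ i ^ 2 - μ k ^ 2).support.card * (μ i ^ t * μ k ^ (m - 1 - t)).support.card :=
                card_support_mul
            _ ≤ 2 * 1 := by
                apply Nat.mul_le_mul
                · refine le_trans (Finset.card_le_card (MvPolynomial.support_sub _ _ _)) ?_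
                  refine le_trans (Finset.card_union_le _ _) ?_
                  have a1 : (μ i ^ 2).support.card ≤ 1 := card_support_pow (hμ i) 2
                  have a2 : (μ k ^ 2).support.card ≤ 1 := card_support_pow (hμ k) 2
                  omega
                · refine le_trans card_support_mul ?_
                  have a1 : (μ i ^ t).support.card ≤ 1 := card_support_pow (hμ i) t
                  have a2 : (μ k ^ (m - 1 - t)).support.card ≤ 1 := card_support_pow (hμ k) (m - 1 - t)
                  exact le_trans (Nat.mul_le_mul a1 a2) (by norm_num)
            _ = 2 := by norm_num
        · have h2 : (2 : MvPolynomial (Fin n) ℝ) * (∑ i, x i * T i)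
              = (2 : ℝ) • (∑ i, x i * T i) := by
            rw [MvPolynomial.smul_eq_C_mul, map_ofNat]
          rw [h2]
          apply bsos_smul (by norm_num)
          apply bsos_finsum
          intro i _
          have : x i * T i = μ i ^ 2 * T i := rfl
          rw [this]
          apply bsos_mul_sq (hμ i)
          exact ih (fun j => μ (i.succAbove j)) (fun j => hμ _)
      -- conclude by rescaling
      have h2m : ((2 * m : ℕ) : ℝ) ≠ 0 := by positivity
      have hsc : ∀ q : MvPolynomial (Fin n) ℝ, ((2 * m : ℕ) : MvPolynomial (Fin n) ℝ) * q
          = ((2 * m : ℕ) : ℝ) • q := by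
        intro q
        rw [MvPolynomial.smul_eq_C_mul, map_natCast]
      set tgt := ∑ j, (μ j ^ 2) ^ (m+1) - ((m+1 : ℕ) : MvPolynomial (Fin n) ℝ) * ∏ j, μ j ^ 2
        with htgt
      have : tgt = (((2 * m : ℕ) : ℝ))⁻¹ • (((2 * m : ℕ) : ℝ) • tgt) := by
        rw [smul_smul, inv_mul_cancel₀ h2m, one_smul]
      rw [show (((m:ℕ)+1 : ℕ) : MvPolynomial (Fin n) ℝ) = ((m+1 : ℕ) : MvPolynomial (Fin n) ℝ) from rfl] at *
      have hgoal : BSOS tgt := by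
        rw [this]
        apply bsos_smul (by positivity)
        rw [← hsc, hId]
        exact hRHS
      exact hgoal



/-- AM-GM for an even number of monomials is a sum of binomial squares. -/
lemma bsos_amgm_even (M : ℕ) (hM : 1 ≤ M) {ι : Type} [Fintype ι]
    (hcard : Fintype.card ι = 2 * M) (u : ι → MvPolynomial (Fin n) ℝ)
    (hu : ∀ j, (u j).support.card ≤ 1) :
    BSOS (∑ j, u j ^ (2 * M) - ((2 * M : ℕ) : MvPolynomial (Fin n) ℝ) * ∏ j, u j) := by
  have hcard' : Fintype.card ι = M + M := by omega
  let e : Fin M ⊕ Fin M ≃ ι :=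
    (finSumFinEquiv.trans (finCongr (rfl : M + M = M + M))).trans
      ((Fintype.equivFinOfCardEq hcard').symm)
  have hsum : ∑ j, u j ^ (2 * M) = ∑ s : Fin M ⊕ Fin M, u (e s) ^ (2 * M) :=
    (Fintype.sum_equiv e _ _ fun s => rfl).symm
  have hprod : ∏ j, u j = ∏ s : Fin M ⊕ Fin M, u (e s) :=
    (Fintype.prod_equiv e _ _ fun s => rfl).symm
  set a : Fin M → MvPolynomial (Fin n) ℝ := fun j => u (e (Sum.inl j)) with ha
  set b : Fin M → MvPolynomial (Fin n) ℝ := fun j => u (e (Sum.inr j)) with hb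
  have hsum2 : ∑ s : Fin M ⊕ Fin M, u (e s) ^ (2 * M)
      = ∑ j, a j ^ (2 * M) + ∑ j, b j ^ (2 * M) := Fintype.sum_sum_type _
  have hprod2 : ∏ s : Fin M ⊕ Fin M, u (e s) = (∏ j, a j) * (∏ j, b j) :=
    Fintype.prod_sum_type _
  rw [hsum, hprod, hsum2, hprod2]
  have key : ∑ j, a j ^ (2*M) + ∑ j, b j ^ (2*M)
        - ((2 * M : ℕ) : MvPolynomial (Fin n) ℝ) * ((∏ j, a j) * (∏ j, b j))
      = (∑ j, (a j ^ 2) ^ M - (M : MvPolynomial (Fin n) ℝ) * ∏ j, a j ^ 2)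
      + (∑ j, (b j ^ 2) ^ M - (M : MvPolynomial (Fin n) ℝ) * ∏ j, b j ^ 2)
      + (M : ℝ) • ((∏ j, a j - ∏ j, b j) ^ 2) := by
    have pa : ∏ j, a j ^ 2 = (∏ j, a j) ^ 2 := by rw [Finset.prod_pow]
    have pb : ∏ j, b j ^ 2 = (∏ j, b j) ^ 2 := by rw [Finset.prod_pow]
    have sa : ∀ j, (a j ^ 2) ^ M = a j ^ (2 * M) := fun j => by rw [← pow_mul]
    have sb : ∀ j, (b j ^ 2) ^ M = b j ^ (2 * M) := fun j => by rw [← pow_mul]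
    simp only [Finset.sum_congr rfl fun j _ => sa j, Finset.sum_congr rfl fun j _ => sb j,
      pa, pb, MvPolynomial.smul_eq_C_mul, map_natCast]
    push_cast
    ring
  rw [key]
  apply bsos_add
  apply bsos_add
  · exact bsos_amgm_sq M a fun j => hu _
  · exact bsos_amgm_sq M b fun j => hu _
  · apply bsos_smul (by positivity)
    apply bsos_sq
    refine le_trans (Finset.card_le_card (MvPolynomial.support_sub _ _ _)) ?_
    refine le_trans (Finset.card_union_le _ _) ?_
    have a1 := card_support_prod Finset.univ a (fun j _ => hu _)
    have a2 := card_support_prod Finset.univ b (fun j _ => hu _)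
    omega

/-- Weighted AM-GM for monomials, weights summing to an even number `2M`. -/
lemma bsos_amgm_weighted (M : ℕ) (hM : 1 ≤ M) {ι : Type} [Fintype ι]
    (β : ι → ℕ) (hβ : ∑ j, β j = 2 * M) (v : ι → MvPolynomial (Fin n) ℝ)
    (hv : ∀ j, (v j).support.card ≤ 1) :
    BSOS (∑ j, (β j : MvPolynomial (Fin n) ℝ) * v j ^ (2 * M)
      - ((2 * M : ℕ) : MvPolynomial (Fin n) ℝ) * ∏ j, v j ^ (β j)) := by
  classical
  have hcard : Fintype.card ((j : ι) × Fin (β j)) = 2 * M := by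
    rw [Fintype.card_sigma]; simpa using hβ
  have h := bsos_amgm_even M hM hcard (fun s => v s.1) (fun s => hv s.1)
  have hsum : ∑ s : (j : ι) × Fin (β j), v s.1 ^ (2 * M)
      = ∑ j, (β j : MvPolynomial (Fin n) ℝ) * v j ^ (2 * M) := by
    rw [← Finset.univ_sigma_univ, Finset.sum_sigma]
    refine Finset.sum_congr rfl fun j _ => ?_
    simp [nsmul_eq_mul]
  have hprod : ∏ s : (j : ι) × Fin (β j), v s.1 = ∏ j, v j ^ (β j) := by
    rw [← Finset.univ_sigma_univ, Finset.prod_sigma]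
    refine Finset.prod_congr rfl fun j _ => ?_
    simp
  rwa [hsum, hprod] at h



lemma monomial_prod {ι : Type*} (s : Finset ι) (γ : ι → Fin n →₀ ℕ) (c : ι → ℝ) :
    ∏ j ∈ s, (monomial (γ j) (c j) : MvPolynomial (Fin n) ℝ)
      = monomial (∑ j ∈ s, γ j) (∏ j ∈ s, c j) := by
  classical
  induction s using Finset.induction with
  | empty => simp [MvPolynomial.monomial_zero', MvPolynomial.C_1]
  | insert _ _ hx ih =>
    rw [Finset.prod_insert hx, Finset.sum_insert hx, Finset.prod_insert hx, ih, monomial_mul]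

lemma bsos_alpha (d M : ℕ) (hdM : d = 2 * M) (hM : 1 ≤ M)
    (α : Fin n →₀ ℕ) (hadeg : (∑ i, α i) ≤ d)
    (c0 : ℝ) (hc0 : c0 ≠ 0)
    (hnsq : ¬ IsSquare (monomial α c0 : MvPolynomial (Fin n) ℝ))
    (zv : Fin n → ℝ) (hznn : ∀ i, 0 ≤ zv i) (hziff : ∀ i, zv i = 0 ↔ α i = 0)
    (hcon : (∑ i, α i) = d → ∏ i, (zv i / (α i : ℝ)) ^ (α i) = (c0 / (d:ℝ)) ^ d) :
    BSOS ((monomial α c0 : MvPolynomial (Fin n) ℝ)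
      + ∑ i, monomial (Finsupp.single i d) (zv i)
      + C (((d:ℝ) - ((∑ i, α i : ℕ) : ℝ)) *
        (((c0/(d:ℝ))^d * ∏ i, ((α i : ℝ)/zv i)^(α i)) ^
          ((1:ℝ)/((d:ℝ) - ((∑ i, α i : ℕ) : ℝ)))))) := by
  classical
  have hde : Even d := hdM ▸ even_two_mul M
  have hd0 : d ≠ 0 := by omega
  have hdR : (0:ℝ) < (d:ℝ) := by positivity
  set A : ℕ := ∑ i, α i with hA
  set r : ℕ := d - A with hr
  have hrA : (r:ℝ) = (d:ℝ) - (A:ℝ) := by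
    rw [hr]; push_cast [Nat.cast_sub hadeg]; ring
  set base : ℝ := (c0/(d:ℝ))^d * ∏ i, ((α i : ℝ)/zv i)^(α i) with hbase
  have hbase_nn : 0 ≤ base := by
    apply mul_nonneg (hde.pow_nonneg _)
    exact Finset.prod_nonneg fun i _ => pow_nonneg (div_nonneg (Nat.cast_nonneg _) (hznn i)) _
  set cA : ℝ := base ^ ((1:ℝ)/((d:ℝ) - (A:ℝ))) with hcA
  have hcA_nn : 0 ≤ cA := Real.rpow_nonneg hbase_nn _
  set b : Fin n → ℝ := fun i => (zv i / (α i : ℝ)) ^ ((d:ℝ)⁻¹) with hb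
  set w : ℝ := cA ^ ((d:ℝ)⁻¹) with hw
  have hbnn : ∀ i, 0 ≤ b i := fun i => Real.rpow_nonneg (div_nonneg (hznn i) (Nat.cast_nonneg _)) _
  have hwnn : 0 ≤ w := Real.rpow_nonneg hcA_nn _
  have hbd : ∀ i, b i ^ d = zv i / (α i : ℝ) := fun i =>
    Real.rpow_inv_natCast_pow (div_nonneg (hznn i) (Nat.cast_nonneg _)) hd0
  have hwd : w ^ d = cA := Real.rpow_inv_natCast_pow hcA_nn hd0
  -- the weighted AM-GM instance
  set β : Option (Fin n) → ℕ := fun o => o.elim r (fun i => α i) with hβ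
  set v : Option (Fin n) → MvPolynomial (Fin n) ℝ :=
    fun o => o.elim (C w) (fun i => monomial (Finsupp.single i 1) (b i)) with hv
  have hβsum : ∑ o, β o = 2 * M := by
    rw [Fintype.sum_option]
    simp only [hβ, Option.elim]
    rw [← hA, ← hdM, hr]
    omega
  have hvcard : ∀ o, (v o).support.card ≤ 1 := by
    intro o
    cases o with
    | none => rw [hv]; simp only [Option.elim]; rw [MvPolynomial.C_apply]; exact card_support_monomial_le
    | some i => exact card_support_monomial_le
  have hW := bsos_amgm_weighted M hM β hβsum v hvcard
  rw [← hdM] at hW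
  -- compute the sum part
  have hsum : ∑ o, (β o : MvPolynomial (Fin n) ℝ) * v o ^ d
      = C ((r:ℝ) * cA) + ∑ i, monomial (Finsupp.single i d) (zv i) := by
    rw [Fintype.sum_option]
    congr 1
    · simp only [hβ, hv, Option.elim]
      rw [← map_pow, hwd, map_natCast (C : ℝ →+* MvPolynomial (Fin n) ℝ) r |>.symm, ← map_mul]
    · refine Finset.sum_congr rfl fun i _ => ?_
      simp only [hβ, hv, Option.elim]
      rw [monomial_pow, Finsupp.smul_single, smul_eq_mul, mul_one,
        map_natCast (C : ℝ →+* MvPolynomial (Fin n) ℝ) (α i) |>.symm, C_mul_monomial]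
      congr 1
      rcases Nat.eq_zero_or_pos (α i) with h0 | hpos
      · rw [h0, (hziff i).2 h0]; simp
      · rw [hbd i, mul_div_cancel₀]
        exact Nat.cast_ne_zero.mpr (by omega)
  -- compute the product part
  set B : ℝ := ∏ i, b i ^ α i with hB
  set K : ℝ := w ^ r * B with hK
  have hprod : ((d:ℕ) : MvPolynomial (Fin n) ℝ) * ∏ o, v o ^ β o
      = monomial α ((d:ℝ) * K) := by
    rw [Fintype.prod_option]
    simp only [hβ, hv, Option.elim]
    have h1 : ∀ i, (monomial (Finsupp.single i 1) (b i) : MvPolynomial (Fin n) ℝ) ^ α i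
        = monomial (Finsupp.single i (α i)) (b i ^ α i) := by
      intro i
      rw [monomial_pow, Finsupp.smul_single, smul_eq_mul, mul_one]
    rw [Finset.prod_congr rfl fun i _ => h1 i, monomial_prod]
    have h2 : ∑ i, Finsupp.single i (α i) = α := by
      rw [← Finsupp.sum_fintype α Finsupp.single (fun i => Finsupp.single_zero i)]
      exact Finsupp.sum_single α
    rw [h2, ← map_pow, ← hB, C_mul_monomial,
      map_natCast (C : ℝ →+* MvPolynomial (Fin n) ℝ) d |>.symm, C_mul_monomial]
  -- K = |c0| / d
  have hZPa : (∏ i, (zv i / (α i : ℝ)) ^ (α i)) * (∏ i, ((α i : ℝ)/zv i)^(α i)) = 1 := by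
    rw [← Finset.prod_mul_distrib]
    refine Finset.prod_eq_one fun i _ => ?_
    rcases Nat.eq_zero_or_pos (α i) with h0 | hpos
    · rw [h0]; simp
    · have hz0 : zv i ≠ 0 := fun h => by have := (hziff i).1 h; omega
      have ha0 : ((α i : ℝ)) ≠ 0 := Nat.cast_ne_zero.mpr (by omega)
      rw [← mul_pow, div_mul_div_comm, mul_comm (zv i), div_self (by exact mul_ne_zero ha0 hz0), one_pow]
  have hKnn : 0 ≤ K := mul_nonneg (pow_nonneg hwnn _) (Finset.prod_nonneg fun i _ => pow_nonneg (hbnn i) _)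
  have hBd : B ^ d = ∏ i, (zv i / (α i : ℝ)) ^ (α i) := by
    rw [hB, ← Finset.prod_pow]
    refine Finset.prod_congr rfl fun i _ => ?_
    rw [← pow_mul, mul_comm (α i) d, pow_mul, hbd i]
  have hKd : K ^ d = (c0 / (d:ℝ)) ^ d := by
    rw [hK, mul_pow, ← pow_mul, mul_comm r d, pow_mul, hwd, hBd]
    rcases Nat.eq_zero_or_pos r with hr0 | hrpos
    · rw [hr0, pow_zero, one_mul]
      exact hcon (by omega)
    · have hcAr : cA ^ r = base := by
        have : cA = base ^ ((r:ℝ))⁻¹ := by rw [hcA, hrA, one_div]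
        rw [this]
        exact Real.rpow_inv_natCast_pow hbase_nn (by omega)
      rw [hcAr, hbase]
      linear_combination ((c0/(d:ℝ))^d) * hZPa
  have hKabs : K = |c0| / (d:ℝ) := by
    have h2 : K ^ d = (|c0| / (d:ℝ)) ^ d := by
      rw [hKd, div_pow, div_pow, hde.pow_abs]
    have h3 : (0:ℝ) ≤ |c0| / (d:ℝ) := div_nonneg (abs_nonneg _) (le_of_lt hdR)
    exact (pow_left_strictMonoOn₀ hd0).injOn hKnn h3 h2
  have hdK : (d:ℝ) * K = |c0| := by
    rw [hKabs, mul_div_cancel₀ _ (ne_of_gt hdR)]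
  rw [hsum, hprod, hdK] at hW
  -- identify the constant
  have hcst : (C (((d:ℝ) - ((A : ℕ) : ℝ)) * cA) : MvPolynomial (Fin n) ℝ) = C ((r:ℝ) * cA) := by
    rw [hrA]
  -- final sign analysis
  rcases lt_or_gt_of_ne hc0 with hneg | hpos
  · have habs : monomial α (|c0|) = - monomial α c0 := by
      rw [abs_of_neg hneg, map_neg]
    have : (monomial α c0 : MvPolynomial (Fin n) ℝ)
        + ∑ i, monomial (Finsupp.single i d) (zv i)
        + C (((d:ℝ) - ((A:ℕ):ℝ)) * cA)
        = C ((r:ℝ) * cA) + ∑ i, monomial (Finsupp.single i d) (zv i) - monomial α (|c0|) := by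
      rw [habs, hcst]; ring
    rw [this]
    exact hW
  · -- c0 > 0 : flip the sign of an odd variable
    have hodd : ∃ i₀, Odd (α i₀) := by
      by_contra hall
      push_neg at hall
      apply hnsq
      have hev : ∀ i, Even (α i) := fun i => Nat.not_odd_iff_even.mp (hall i)
      exact ⟨_, by rw [monomial_eq_sq (le_of_lt hpos) hev, sq]⟩
    obtain ⟨i₀, hi₀⟩ := hodd
    have hflip := bsos_flip i₀ hW
    rw [map_sub, map_add, map_sum] at hflip
    have f1 : flipHom i₀ (C ((r:ℝ) * cA)) = C ((r:ℝ) * cA) := by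
      rw [flipHom]; exact aeval_C _ _
    have f2 : ∀ i, flipHom i₀ (monomial (Finsupp.single i d) (zv i))
        = monomial (Finsupp.single i d) (zv i) := by
      intro i
      rw [flipHom_monomial]
      congr 1
      rw [Finsupp.single_apply]
      split
      · rw [hde.neg_one_pow, one_mul]
      · rw [pow_zero, one_mul]
    have f3 : flipHom i₀ (monomial α (|c0|)) = - monomial α c0 := by
      rw [flipHom_monomial, hi₀.neg_one_pow, abs_of_pos hpos, ← map_neg]
      congr 1
      ring
    rw [f1, f3, Finset.sum_congr rfl fun i _ => f2 i] at hflip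
    have : (monomial α c0 : MvPolynomial (Fin n) ℝ)
        + ∑ i, monomial (Finsupp.single i d) (zv i)
        + C (((d:ℝ) - ((A:ℕ):ℝ)) * cA)
        = C ((r:ℝ) * cA) + ∑ i, monomial (Finsupp.single i d) (zv i) - (- monomial α c0) := by
      rw [hcst]; ring
    rw [this]
    exact hflip

end GMAux

/-- `Finset.filter` with classical decidability. -/
def pfilter {β : Type*} (s : Finset β) (q : β → Prop) : Finset β :=
  @Finset.filter β q (fun _ => Classical.propDecidable _) s

/-- `|α| := α₁ + ⋯ + αₙ` for a multi-index `α`. -/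
def adeg {n : ℕ} (α : Fin n →₀ ℕ) : ℕ := ∑ i, α i

/-- `Ω(p) := {α : |α| ≤ d, p_α ≠ 0, α ∉ {0, ε₁, …, εₙ}}`. -/
def OmegaSet {n : ℕ} (d : ℕ) (p : MvPolynomial (Fin n) ℝ) : Finset (Fin n →₀ ℕ) :=
  pfilter p.support (fun α => adeg α ≤ d ∧ α ≠ 0 ∧ ∀ i, α ≠ Finsupp.single i d)

/-- `Δ(p) := {α ∈ Ω(p) : p_α x^α is not a square}`. -/
def DelSet {n : ℕ} (d : ℕ) (p : MvPolynomial (Fin n) ℝ) : Finset (Fin n →₀ ℕ) :=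
  pfilter (OmegaSet d p)
    (fun α => ¬ IsSquare ((monomial α (p.coeff α)) : MvPolynomial (Fin n) ℝ))

/-- Feasibility for program (lw) for `p`. -/
def LwFeas {n : ℕ} (d : ℕ) (p : MvPolynomial (Fin n) ℝ)
    (z : (Fin n →₀ ℕ) → Fin n → ℝ) : Prop :=
  (∀ α ∈ DelSet d p, ∀ i, 0 ≤ z α i ∧ (z α i = 0 ↔ α i = 0)) ∧
  (∀ i, ∑ α ∈ DelSet d p, z α i ≤ p.coeff (Finsupp.single i d)) ∧
  (∀ α ∈ DelSet d p, adeg α = d →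
    ∏ i, (z α i / (α i : ℝ)) ^ (α i) = (p.coeff α / (d : ℝ)) ^ d)

/-- The objective function `v` of program (lw). -/
def lwObj {n : ℕ} (d : ℕ) (p : MvPolynomial (Fin n) ℝ)
    (z : (Fin n →₀ ℕ) → Fin n → ℝ) : ℝ :=
  ∑ α ∈ pfilter (DelSet d p) (fun α => adeg α < d),
    ((d : ℝ) - (adeg α : ℝ)) *
      (((p.coeff α / (d : ℝ)) ^ d * ∏ i, ((α i : ℝ) / z α i) ^ (α i)) ^
        ((1 : ℝ) / ((d : ℝ) - (adeg α : ℝ))))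

/-- `ρ(p) ∈ [0,∞]`, the infimum of `v` over the feasible set (`⊤` if infeasible). -/
def lwRho {n : ℕ} (d : ℕ) (p : MvPolynomial (Fin n) ℝ) : EReal :=
  sInf ((fun z => ((lwObj d p z : ℝ) : EReal)) '' {z | LwFeas d p z})

/-- `p_gp := p(0) − ρ(p) ∈ ℝ ∪ {−∞}`. -/
def lwGp {n : ℕ} (d : ℕ) (p : MvPolynomial (Fin n) ℝ) : EReal :=
  ((eval (0 : Fin n → ℝ) p : ℝ) : EReal) - lwRho d p

/-- `G(λ) := f − ∑ⱼ λⱼ gⱼ`. -/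
def polyG {n m : ℕ} (f : MvPolynomial (Fin n) ℝ) (g : Fin m → MvPolynomial (Fin n) ℝ)
    (lam : Fin m → ℝ) : MvPolynomial (Fin n) ℝ :=
  f - ∑ j, C (lam j) * g j

/-- `s(f,g) := sup{G(λ)_gp : λ ∈ [0,∞)^m}`. -/
def sBound {n m : ℕ} (d : ℕ) (f : MvPolynomial (Fin n) ℝ)
    (g : Fin m → MvPolynomial (Fin n) ℝ) : EReal :=
  sSup ((fun lam => lwGp d (polyG f g lam)) '' {lam : Fin m → ℝ | ∀ j, 0 ≤ lam j})



lemma gm_main {n : ℕ} (d M : ℕ) (hdM : d = 2 * M) (hM : 1 ≤ M)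
    (p : MvPolynomial (Fin n) ℝ) (hp : p.totalDegree ≤ d)
    (z : (Fin n →₀ ℕ) → Fin n → ℝ) (hz : LwFeas d p z) :
    BSOS (p - C (eval (0 : Fin n → ℝ) p) + C (lwObj d p z)) := by
  classical
  have hd0 : d ≠ 0 := by omega
  have hde : Even d := hdM ▸ even_two_mul M
  have hdegS : ∀ β ∈ p.support, adeg β ≤ d := by
    intro β hβ
    have h1 := MvPolynomial.le_totalDegree hβ
    have h2 : (β.sum fun _ e => e) = adeg β := by
      rw [adeg, Finsupp.sum_fintype]
      intro i; rfl
    omega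
  have hmemΔ : ∀ α, α ∈ DelSet d p ↔
      (α ∈ p.support ∧ (adeg α ≤ d ∧ α ≠ 0 ∧ ∀ i, α ≠ Finsupp.single i d)) ∧
        ¬ IsSquare ((monomial α (p.coeff α)) : MvPolynomial (Fin n) ℝ) := by
    intro α
    unfold DelSet OmegaSet pfilter
    simp only [Finset.mem_filter]
  -- the objective as a sum over Δ
  set vterm : (Fin n →₀ ℕ) → ℝ := fun α =>
    ((d : ℝ) - (adeg α : ℝ)) *
      (((p.coeff α / (d : ℝ)) ^ d * ∏ i, ((α i : ℝ) / z α i) ^ (α i)) ^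
        ((1 : ℝ) / ((d : ℝ) - (adeg α : ℝ)))) with hvterm
  have hlw : lwObj d p z = ∑ α ∈ DelSet d p, vterm α := by
    rw [lwObj]
    unfold pfilter
    refine Finset.sum_subset (fun α hα => ?_) ?_
    · simp only [Finset.mem_filter] at hα
      exact hα.1
    intro α hα hnα
    simp only [Finset.mem_filter] at hnα
    have h1 : adeg α = d := by
      have h2 := ((hmemΔ α).1 hα).1.2.1
      have h3 : ¬ adeg α < d := fun h => hnα ⟨hα, h⟩
      omega
    have h4 : ((d : ℝ) - (adeg α : ℝ)) = 0 := by rw [h1]; ring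
    simp only [h4, zero_mul]
  -- decomposition of p
  set S := p.support with hS
  set SEs : MvPolynomial (Fin n) ℝ :=
    ∑ i, monomial (Finsupp.single i d) (p.coeff (Finsupp.single i d)) with hSEs
  set Bset := (OmegaSet d p).filter
    (fun α => IsSquare ((monomial α (p.coeff α)) : MvPolynomial (Fin n) ℝ)) with hBset
  set Bs : MvPolynomial (Fin n) ℝ := ∑ β ∈ Bset, monomial β (p.coeff β) with hBs
  set Ds0 : MvPolynomial (Fin n) ℝ := ∑ α ∈ DelSet d p, monomial α (p.coeff α) with hDs0
  have hsingle0 : ∀ i : Fin n, (Finsupp.single i d : Fin n →₀ ℕ) ≠ 0 := by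
    intro i h
    have := Finsupp.single_eq_zero.mp h
    omega
  have hΩeq : (S.filter (fun β => ¬ β = 0)).filter
      (fun β => ¬ ∃ i, β = Finsupp.single i d) = OmegaSet d p := by
    ext β
    unfold OmegaSet pfilter
    simp only [Finset.mem_filter]
    constructor
    · rintro ⟨⟨h1, h2⟩, h3⟩
      exact ⟨h1, hdegS β h1, h2, fun i hi => h3 ⟨i, hi⟩⟩
    · rintro ⟨h1, _, h2, h3⟩
      exact ⟨⟨h1, h2⟩, fun ⟨i, hi⟩ => h3 i hi⟩
  have h1 : p = C (p.coeff 0) + SEs + (Ds0 + Bs) := by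
    conv_lhs => rw [p.as_sum]
    rw [← Finset.sum_filter_add_sum_filter_not S (fun β => β = 0)
      (fun β => monomial β (p.coeff β))]
    rw [← Finset.sum_filter_add_sum_filter_not (S.filter (fun β => ¬ β = 0))
      (fun β => ∃ i, β = Finsupp.single i d) (fun β => monomial β (p.coeff β))]
    rw [hΩeq]
    rw [← Finset.sum_filter_add_sum_filter_not (OmegaSet d p)
      (fun α => ¬ IsSquare ((monomial α (p.coeff α)) : MvPolynomial (Fin n) ℝ))
      (fun β => monomial β (p.coeff β))]
    have e0 : ∑ β ∈ S.filter (fun β => β = 0), monomial β (p.coeff β)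
        = C (p.coeff 0) := by
      rw [Finset.filter_eq' S 0]
      split
      · rw [Finset.sum_singleton, monomial_zero']
      · rw [Finset.sum_empty]
        have h5 : p.coeff 0 = 0 := by
          rw [← MvPolynomial.notMem_support_iff]
          assumption
        rw [h5, map_zero]
    have eE : ∑ β ∈ (S.filter (fun β => ¬ β = 0)).filter
        (fun β => ∃ i, β = Finsupp.single i d), monomial β (p.coeff β) = SEs := by
      have hsub : (S.filter (fun β => ¬ β = 0)).filter
          (fun β => ∃ i, β = Finsupp.single i d)
          ⊆ Finset.image (fun i => Finsupp.single i d) Finset.univ := by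
        intro β hβ
        simp only [Finset.mem_filter] at hβ
        obtain ⟨⟨_, _⟩, i, hi⟩ := hβ
        rw [Finset.mem_image]
        exact ⟨i, Finset.mem_univ i, hi.symm⟩
      have hvan : ∀ β ∈ Finset.image (fun i => Finsupp.single i d) Finset.univ,
          β ∉ (S.filter (fun β => ¬ β = 0)).filter
            (fun β => ∃ i, β = Finsupp.single i d) →
          (monomial β (p.coeff β) : MvPolynomial (Fin n) ℝ) = 0 := by
        intro β hβ hnβ
        rw [Finset.mem_image] at hβ
        obtain ⟨i, _, hi⟩ := hβ
        by_cases hsupp : β ∈ S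
        · exfalso
          apply hnβ
          simp only [Finset.mem_filter]
          exact ⟨⟨hsupp, by rw [← hi]; exact hsingle0 i⟩, ⟨i, hi.symm⟩⟩
        · rw [MvPolynomial.notMem_support_iff.mp hsupp, map_zero]
      have hinj : ∀ i ∈ (Finset.univ : Finset (Fin n)), ∀ j ∈ Finset.univ,
          Finsupp.single i d = Finsupp.single j d → i = j := by
        intro i _ j _ hij
        exact Finsupp.single_left_injective hd0 hij
      rw [Finset.sum_subset hsub hvan, Finset.sum_image hinj, hSEs]
    have eΔ : (OmegaSet d p).filter
        (fun α => ¬ IsSquare ((monomial α (p.coeff α)) : MvPolynomial (Fin n) ℝ))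
        = DelSet d p := by
      unfold DelSet pfilter
      ext β
      simp only [Finset.mem_filter]
    have eB : (OmegaSet d p).filter
        (fun α => ¬ ¬ IsSquare ((monomial α (p.coeff α)) : MvPolynomial (Fin n) ℝ))
        = Bset := by
      rw [hBset]
      ext β
      simp only [Finset.mem_filter, not_not]
    rw [e0, eE, eΔ, eB, ← hBs, ← hDs0]
    ring
  -- the z-weighted monomials
  have hzmem := hz.1
  have hbudget := hz.2.1
  have hcon := hz.2.2
  set A : MvPolynomial (Fin n) ℝ := ∑ i, monomial (Finsupp.single i d)
    (p.coeff (Finsupp.single i d) - ∑ α ∈ DelSet d p, z α i) with hA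
  set Dd : MvPolynomial (Fin n) ℝ := ∑ α ∈ DelSet d p,
    (monomial α (p.coeff α) + ∑ i, monomial (Finsupp.single i d) (z α i) + C (vterm α)) with hDd
  have heval0 : eval (0 : Fin n → ℝ) p = p.coeff 0 := by
    simp [MvPolynomial.eval_zero, MvPolynomial.constantCoeff_eq]
  have hfinal : p - C (eval (0 : Fin n → ℝ) p) + C (lwObj d p z) = A + Bs + Dd := by
    have hA' : A = SEs - ∑ i, monomial (Finsupp.single i d) (∑ α ∈ DelSet d p, z α i) := by
      rw [hA, hSEs, ← Finset.sum_sub_distrib]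
      exact Finset.sum_congr rfl fun i _ => map_sub _ _ _
    have hDd' : Dd = Ds0 + ((∑ α ∈ DelSet d p, ∑ i, monomial (Finsupp.single i d) (z α i))
        + ∑ α ∈ DelSet d p, C (vterm α)) := by
      rw [hDd, hDs0, ← Finset.sum_add_distrib, ← Finset.sum_add_distrib]
      exact Finset.sum_congr rfl fun α _ => by ring
    have hswap : ∑ α ∈ DelSet d p, ∑ i, monomial (Finsupp.single i d) (z α i)
        = ∑ i, monomial (Finsupp.single i d) (∑ α ∈ DelSet d p, z α i) := by
      rw [Finset.sum_comm]
      exact Finset.sum_congr rfl fun i _ => (map_sum _ _ _).symm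
    have hCv : (C (lwObj d p z) : MvPolynomial (Fin n) ℝ) = ∑ α ∈ DelSet d p, C (vterm α) := by
      rw [hlw, map_sum]
    rw [heval0, hCv, hA', hDd', ← hswap]
    linear_combination h1
  rw [hfinal]
  apply bsos_add
  apply bsos_add
  · -- A
    rw [hA]
    apply bsos_finsum
    intro i _
    have hnn : 0 ≤ p.coeff (Finsupp.single i d) - ∑ α ∈ DelSet d p, z α i :=
      sub_nonneg.mpr (hbudget i)
    have hev : ∀ j, Even ((Finsupp.single i d : Fin n →₀ ℕ) j) := by
      intro j
      rw [Finsupp.single_apply]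
      split
      · exact hde
      · exact Even.zero
    rw [monomial_eq_sq hnn hev]
    exact bsos_sq (le_trans card_support_monomial_le one_le_two)
  · -- Bs
    rw [hBs]
    apply bsos_finsum
    intro β hβ
    rw [hBset] at hβ
    simp only [Finset.mem_filter] at hβ
    obtain ⟨hβΩ, hsq⟩ := hβ
    have hcoeff : p.coeff β ≠ 0 := by
      unfold OmegaSet pfilter at hβΩ
      simp only [Finset.mem_filter] at hβΩ
      exact MvPolynomial.mem_support_iff.mp hβΩ.1
    obtain ⟨hpos, hev⟩ := isSquare_monomial_iff hcoeff hsq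
    rw [monomial_eq_sq (le_of_lt hpos) hev]
    exact bsos_sq (le_trans card_support_monomial_le one_le_two)
  · -- Dd
    rw [hDd]
    apply bsos_finsum
    intro α hα
    obtain ⟨⟨hsupp, hdeg, hne0, hnsing⟩, hnsq⟩ := (hmemΔ α).1 hα
    have hcoeff : p.coeff α ≠ 0 := MvPolynomial.mem_support_iff.mp hsupp
    have hznn : ∀ i, 0 ≤ z α i := fun i => (hzmem α hα i).1
    have hziff : ∀ i, z α i = 0 ↔ α i = 0 := fun i => (hzmem α hα i).2
    have hcon' : (∑ i, α i) = d →
        ∏ i, (z α i / (α i : ℝ)) ^ (α i) = (p.coeff α / (d : ℝ)) ^ d :=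
      fun h => hcon α hα h
    have hdeg' : (∑ i, α i) ≤ d := hdeg
    exact bsos_alpha d M hdM hM α hdeg' (p.coeff α) hcoeff hnsq (z α) hznn hziff hcon'
/-- Ghasemi–Marshall, Theorem 3.1: for every feasible point `z` of program (lw) for `p`,
`p − p(0) + v(z)` is a sum of squares of binomials; in particular `p(0) − v(z)` is a lower
bound for `p` on `ℝⁿ`, and hence `p_gp = p(0) − ρ(p)` is a lower bound for `p` on `ℝⁿ`. -/
theorem stmt0 {n : ℕ} (hn : 1 ≤ n) (d : ℕ) (hd2 : 2 ≤ d) (hde : Even d)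
    (p : MvPolynomial (Fin n) ℝ) (hp : p.totalDegree ≤ d)
    (z : (Fin n →₀ ℕ) → Fin n → ℝ) (hz : LwFeas d p z) :
    (∃ (k : ℕ) (q : Fin k → MvPolynomial (Fin n) ℝ),
        (∀ t, (q t).support.card ≤ 2) ∧
        p - C (eval (0 : Fin n → ℝ) p) + C (lwObj d p z) = ∑ t, q t ^ 2) ∧
    (∀ x : Fin n → ℝ, eval (0 : Fin n → ℝ) p - lwObj d p z ≤ eval x p) ∧
    (∀ x : Fin n → ℝ, lwGp d p ≤ ((eval x p : ℝ) : EReal)) := by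
  obtain ⟨M, hM'⟩ := hde
  have hdM : d = 2 * M := by omega
  have hM : 1 ≤ M := by omega
  have hpart1 := gm_main d M hdM hM p hp z hz
  have hpart2 : ∀ z', LwFeas d p z' → ∀ x : Fin n → ℝ,
      eval (0 : Fin n → ℝ) p - lwObj d p z' ≤ eval x p := by
    intro z' hz' x
    obtain ⟨k, q, hq, e⟩ := gm_main d M hdM hM p hp z' hz'
    have he : eval x p - eval (0 : Fin n → ℝ) p + lwObj d p z'
        = ∑ t, (eval x (q t)) ^ 2 := by
      have h2 := congrArg (eval x) e
      rw [map_add, map_sub, eval_C, eval_C, map_sum] at h2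
      simp only [map_pow] at h2
      exact h2
    have hnn : 0 ≤ ∑ t, (eval x (q t)) ^ 2 :=
      Finset.sum_nonneg fun t _ => sq_nonneg _
    linarith
  refine ⟨hpart1, hpart2 z hz, ?_⟩
  intro x
  have hb : (((eval (0 : Fin n → ℝ) p - eval x p : ℝ)) : EReal) ≤ lwRho d p := by
    rw [lwRho]
    apply le_sInf
    rintro b ⟨z', hz', rfl⟩
    exact EReal.coe_le_coe_iff.mpr (by linarith [hpart2 z' hz' x])
  calc lwGp d p
      = ((eval (0 : Fin n → ℝ) p : ℝ) : EReal) - lwRho d p := rfl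
    _ ≤ ((eval (0 : Fin n → ℝ) p : ℝ) : EReal)
        - (((eval (0 : Fin n → ℝ) p - eval x p : ℝ)) : EReal) :=
        EReal.sub_le_sub (le_refl _) hb
    _ = ((eval x p : ℝ) : EReal) := by
        rw [← EReal.coe_sub]
        congr 1
        ring
end
end

section
/- For every λ ∈ [0,∞)^m, every feasible point z of program (lw) for the polynomial G(λ), and every x̄ ∈ K_g, one has f(x̄) ≥ G(λ)(0) − v(z). Consequently G(λ)_gp ≤ f(x̄) for all x̄ ∈ K_g and all λ ∈ [0,∞)^m, so s(f,g) ≤ inf{f(x̄) : x̄ ∈ K_g}. -/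
open MvPolynomial Finset

noncomputable section

section Aux

open Real

/-- Monomial evaluation. -/
def mono {n : ℕ} (x : Fin n → ℝ) (α : Fin n →₀ ℕ) : ℝ := ∏ i, x i ^ α i

lemma mono_zero {n : ℕ} (x : Fin n → ℝ) : mono x 0 = 1 := by simp [mono]

lemma mono_single {n : ℕ} (x : Fin n → ℝ) (i : Fin n) (d : ℕ) :
    mono x (Finsupp.single i d) = x i ^ d := by
  rw [mono, Finset.prod_eq_single i]
  · rw [Finsupp.single_eq_same]
  · intro j _ hj; rw [Finsupp.single_eq_of_ne' (Ne.symm hj), pow_zero]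
  · simp


lemma mem_pfilter {β : Type*} {s : Finset β} {q : β → Prop} {a : β} :
    a ∈ pfilter s q ↔ a ∈ s ∧ q a :=
  @Finset.mem_filter _ _ (fun _ => Classical.propDecidable _) _ _

lemma sum_pfilter_add {β M : Type*} [AddCommMonoid M] (s : Finset β) (q : β → Prop)
    (f : β → M) :
    ((∑ a ∈ pfilter s q, f a) + ∑ a ∈ pfilter s (fun a => ¬ q a), f a) = ∑ a ∈ s, f a := by
  classical
  have hdis : Disjoint (pfilter s q) (pfilter s (fun a => ¬ q a)) := by
    rw [Finset.disjoint_left]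
    intro a h1 h2
    exact (mem_pfilter.mp h2).2 (mem_pfilter.mp h1).2
  have hun : pfilter s q ∪ pfilter s (fun a => ¬ q a) = s := by
    ext a
    simp only [Finset.mem_union, mem_pfilter]
    by_cases h : q a <;> by_cases h2 : a ∈ s <;> simp [h, h2]
  rw [← Finset.sum_union hdis, hun]

/-- Weights for the weighted AM–GM argument. -/
def wfun {n : ℕ} (d : ℕ) (α : Fin n →₀ ℕ) : Option (Fin n) → ℝ
  | none => ((d : ℝ) - (adeg α : ℝ)) / d
  | some i => (α i : ℝ) / d

/-- Values for the weighted AM–GM argument. -/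
def ufun {n : ℕ} (d : ℕ) (α : Fin n →₀ ℕ) (zα x : Fin n → ℝ) (t : ℝ) :
    Option (Fin n) → ℝ
  | none => if adeg α < d then (d : ℝ) * t else 0
  | some i => if α i = 0 then 0 else (d : ℝ) * zα i * x i ^ d / (α i : ℝ)

lemma wfun_none {n : ℕ} (d : ℕ) (α : Fin n →₀ ℕ) :
    wfun d α none = ((d : ℝ) - (adeg α : ℝ)) / d := rfl

lemma wfun_some {n : ℕ} (d : ℕ) (α : Fin n →₀ ℕ) (i : Fin n) :
    wfun d α (some i) = (α i : ℝ) / d := rfl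

lemma ufun_none {n : ℕ} (d : ℕ) (α : Fin n →₀ ℕ) (zα x : Fin n → ℝ) (t : ℝ) :
    ufun d α zα x t none = if adeg α < d then (d : ℝ) * t else 0 := rfl

lemma ufun_some {n : ℕ} (d : ℕ) (α : Fin n →₀ ℕ) (zα x : Fin n → ℝ) (t : ℝ) (i : Fin n) :
    ufun d α zα x t (some i)
      = if α i = 0 then 0 else (d : ℝ) * zα i * x i ^ d / (α i : ℝ) := rfl

/-- The key AM–GM estimate for a single multi-index. -/
lemma amgm_key {n d : ℕ} (hd2 : 2 ≤ d) (hde : Even d)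
    (α : Fin n →₀ ℕ) (hαd : adeg α ≤ d)
    (c : ℝ) (zα : Fin n → ℝ)
    (hz0 : ∀ i, 0 ≤ zα i) (hziff : ∀ i, zα i = 0 ↔ α i = 0)
    (hcon : adeg α = d → ∏ i, (zα i / (α i : ℝ)) ^ (α i) = (c / (d : ℝ)) ^ d)
    (x : Fin n → ℝ) :
    |c| * ∏ i, |x i| ^ α i ≤
      (∑ i, zα i * x i ^ d) +
      (if adeg α < d then ((d : ℝ) - (adeg α : ℝ)) *
        (((c / (d : ℝ)) ^ d * ∏ i, ((α i : ℝ) / zα i) ^ (α i)) ^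
          ((1 : ℝ) / ((d : ℝ) - (adeg α : ℝ)))) else 0) := by
  have hdne : d ≠ 0 := by omega
  have hd0 : (d : ℝ) ≠ 0 := Nat.cast_ne_zero.mpr hdne
  have hdpos : (0 : ℝ) < d := by
    have : 0 < d := by omega
    exact_mod_cast this
  have hAd : ((adeg α : ℝ)) ≤ (d : ℝ) := Nat.cast_le.mpr hαd
  set B : ℝ := (c / (d : ℝ)) ^ d * ∏ i, ((α i : ℝ) / zα i) ^ (α i) with hB
  have hB0 : 0 ≤ B := mul_nonneg (hde.pow_nonneg _)
    (Finset.prod_nonneg fun i _ => pow_nonneg (div_nonneg (Nat.cast_nonneg _) (hz0 i)) _)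
  set t : ℝ := B ^ ((1 : ℝ) / ((d : ℝ) - (adeg α : ℝ))) with ht
  have ht0 : 0 ≤ t := Real.rpow_nonneg hB0 _
  have hu0 : ∀ o, 0 ≤ ufun d α zα x t o := by
    rintro (_ | i)
    · rw [ufun_none]; split_ifs
      · exact mul_nonneg hdpos.le ht0
      · exact le_refl 0
    · rw [ufun_some]; split_ifs
      · exact le_refl 0
      · exact div_nonneg (mul_nonneg (mul_nonneg hdpos.le (hz0 i)) (hde.pow_nonneg _))
          (Nat.cast_nonneg _)
  have hw0 : ∀ o ∈ Finset.univ, 0 ≤ wfun d α o := by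
    rintro (_ | i) -
    · rw [wfun_none]; exact div_nonneg (by linarith) hdpos.le
    · rw [wfun_some]; positivity
  have hsumA : ∑ i, (α i : ℝ) = ((adeg α : ℝ)) := by
    rw [adeg]; push_cast; rfl
  have hw1 : ∑ o ∈ Finset.univ, wfun d α o = 1 := by
    rw [univ_option, Finset.sum_insertNone, wfun_none]
    have : ∑ i, wfun d α (some i) = ((adeg α : ℝ)) / d := by
      rw [← hsumA, Finset.sum_div]
      exact Finset.sum_congr rfl fun i _ => rfl
    rw [this]
    field_simp
    ring
  have key := Real.geom_mean_le_arith_mean_weighted Finset.univ (wfun d α) (ufun d α zα x t)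
    hw0 hw1 (fun o _ => hu0 o)
  have hL0 : 0 ≤ ∏ o, ufun d α zα x t o ^ wfun d α o :=
    Finset.prod_nonneg fun o _ => Real.rpow_nonneg (hu0 o) _
  have hR0 : 0 ≤ |c| * ∏ i, |x i| ^ α i := by positivity
  -- compute the d-th power of the geometric mean
  have hprod_d : (∏ o, ufun d α zα x t o ^ wfun d α o) ^ d
      = (ufun d α zα x t none) ^ (d - adeg α) * ∏ i, (ufun d α zα x t (some i)) ^ (α i) := by
    rw [← Finset.prod_pow, univ_option, Finset.prod_insertNone]
    congr 1
    · rw [← Real.rpow_natCast (ufun d α zα x t none ^ wfun d α none) d,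
        ← Real.rpow_mul (hu0 none), wfun_none, div_mul_cancel₀ _ hd0,
        ← Nat.cast_sub hαd, Real.rpow_natCast]
    · refine Finset.prod_congr rfl fun i _ => ?_
      rw [← Real.rpow_natCast (ufun d α zα x t (some i) ^ wfun d α (some i)) d,
        ← Real.rpow_mul (hu0 (some i)), wfun_some, div_mul_cancel₀ _ hd0, Real.rpow_natCast]
  have hmid : ∏ i, (ufun d α zα x t (some i)) ^ (α i)
      = (d : ℝ) ^ (adeg α) * (∏ i, (zα i / (α i : ℝ)) ^ (α i)) * ∏ i, (x i ^ d) ^ (α i) := by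
    have h1 : ∀ i, (ufun d α zα x t (some i)) ^ (α i)
        = (d : ℝ) ^ (α i) * (zα i / (α i : ℝ)) ^ (α i) * (x i ^ d) ^ (α i) := by
      intro i
      rcases eq_or_ne (α i) 0 with h | h
      · rw [h, pow_zero, pow_zero, pow_zero, pow_zero]; ring
      · rw [ufun_some, if_neg h, ← mul_pow, ← mul_pow]
        congr 1
        ring
    rw [Finset.prod_congr rfl fun i _ => h1 i, Finset.prod_mul_distrib,
      Finset.prod_mul_distrib, Finset.prod_pow_eq_pow_sum]
    rfl
  have hQR : (∏ i, ((α i : ℝ) / zα i) ^ (α i)) * (∏ i, (zα i / (α i : ℝ)) ^ (α i)) = 1 := by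
    rw [← Finset.prod_mul_distrib]
    apply Finset.prod_eq_one
    intro i _
    rcases eq_or_ne (α i) 0 with h | h
    · rw [h, pow_zero, pow_zero, one_mul]
    · have hzne : zα i ≠ 0 := fun hh => h ((hziff i).mp hh)
      have hαne : (α i : ℝ) ≠ 0 := Nat.cast_ne_zero.mpr h
      rw [← mul_pow, div_mul_div_comm, mul_comm (α i : ℝ), div_self (mul_ne_zero hzne hαne),
        one_pow]
  have hdc : (d : ℝ) * (c / (d : ℝ)) = c := by field_simp
  have hmain : (ufun d α zα x t none) ^ (d - adeg α) * ∏ i, (ufun d α zα x t (some i)) ^ (α i)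
      = c ^ d * ∏ i, (x i ^ d) ^ (α i) := by
    rw [hmid]
    rcases lt_or_ge (adeg α) d with hlt | hge
    · rw [ufun_none, if_pos hlt]
      have hsub : ((d - adeg α : ℕ) : ℝ) = (d : ℝ) - (adeg α : ℝ) := by
        rw [Nat.cast_sub hαd]
      have hsubne : (d : ℝ) - (adeg α : ℝ) ≠ 0 := by
        have : (adeg α : ℝ) < d := by exact_mod_cast hlt
        linarith
      have htp : t ^ (d - adeg α) = B := by
        rw [ht, ← Real.rpow_natCast (B ^ ((1 : ℝ) / ((d : ℝ) - (adeg α : ℝ)))) (d - adeg α),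
          ← Real.rpow_mul hB0, hsub, one_div, inv_mul_cancel₀ hsubne, Real.rpow_one]
      have hdd : (d : ℝ) ^ (d - adeg α) * (d : ℝ) ^ (adeg α) = (d : ℝ) ^ d := by
        rw [← pow_add, Nat.sub_add_cancel hαd]
      have hcd : (d : ℝ) ^ d * (c / (d : ℝ)) ^ d = c ^ d := by
        rw [← mul_pow, hdc]
      calc ((d : ℝ) * t) ^ (d - adeg α) *
            ((d : ℝ) ^ (adeg α) * (∏ i, (zα i / (α i : ℝ)) ^ (α i)) * ∏ i, (x i ^ d) ^ (α i))
          = ((d : ℝ) ^ (d - adeg α) * (d : ℝ) ^ (adeg α)) *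
            ((t ^ (d - adeg α)) *
              ((∏ i, (zα i / (α i : ℝ)) ^ (α i)) * ∏ i, (x i ^ d) ^ (α i))) := by
            rw [mul_pow]; ring
        _ = (d : ℝ) ^ d * (((c / (d : ℝ)) ^ d * ∏ i, ((α i : ℝ) / zα i) ^ (α i)) *
              ((∏ i, (zα i / (α i : ℝ)) ^ (α i)) * ∏ i, (x i ^ d) ^ (α i))) := by
            rw [hdd, htp, hB]
        _ = ((d : ℝ) ^ d * (c / (d : ℝ)) ^ d) *
              (((∏ i, ((α i : ℝ) / zα i) ^ (α i)) * ∏ i, (zα i / (α i : ℝ)) ^ (α i)) *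
                ∏ i, (x i ^ d) ^ (α i)) := by ring
        _ = c ^ d * ∏ i, (x i ^ d) ^ (α i) := by rw [hcd, hQR, one_mul]
    · have heq : adeg α = d := le_antisymm hαd hge
      rw [ufun_none, if_neg (not_lt.mpr hge), heq, Nat.sub_self, pow_zero, one_mul,
        hcon heq, ← mul_pow, hdc]
  have hRd : (|c| * ∏ i, |x i| ^ α i) ^ d = c ^ d * ∏ i, (x i ^ d) ^ (α i) := by
    rw [mul_pow, hde.pow_abs, ← Finset.prod_pow]
    congr 1
    refine Finset.prod_congr rfl fun i _ => ?_
    rw [← pow_mul, mul_comm (α i) d, pow_mul, hde.pow_abs]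
  have hlhs : ∏ o, ufun d α zα x t o ^ wfun d α o = |c| * ∏ i, |x i| ^ α i := by
    have hpow : (∏ o, ufun d α zα x t o ^ wfun d α o) ^ d
        = (|c| * ∏ i, |x i| ^ α i) ^ d := by rw [hprod_d, hmain, hRd]
    exact (pow_left_inj₀ hL0 hR0 hdne).mp hpow
  have hrhs : ∑ o ∈ Finset.univ, wfun d α o * ufun d α zα x t o
      = (∑ i, zα i * x i ^ d) + (if adeg α < d then ((d : ℝ) - (adeg α : ℝ)) * t else 0) := by
    rw [univ_option, Finset.sum_insertNone, add_comm]
    congr 1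
    · refine Finset.sum_congr rfl fun i _ => ?_
      rw [wfun_some, ufun_some]
      rcases eq_or_ne (α i) 0 with h | h
      · rw [if_pos h, mul_zero, (hziff i).mpr h, zero_mul]
      · rw [if_neg h]
        have hαne : (α i : ℝ) ≠ 0 := Nat.cast_ne_zero.mpr h
        field_simp
    · rw [wfun_none, ufun_none]
      split_ifs with h
      · field_simp
      · have heq : adeg α = d := le_antisymm hαd (not_lt.mp h)
        rw [heq]; simp
  calc |c| * ∏ i, |x i| ^ α i
      = ∏ o, ufun d α zα x t o ^ wfun d α o := hlhs.symm
    _ ≤ ∑ o ∈ Finset.univ, wfun d α o * ufun d α zα x t o := key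
    _ = (∑ i, zα i * x i ^ d)
          + (if adeg α < d then ((d : ℝ) - (adeg α : ℝ)) * t else 0) := hrhs

end Aux


section Core

/-- The core soundness estimate: for any feasible `z` of (lw) for `p`,
`p(0) − v(z) ≤ p(x)` for every `x`. -/
lemma core_bound {n d : ℕ} (hd2 : 2 ≤ d) (hde : Even d)
    (p : MvPolynomial (Fin n) ℝ) (hp : p.totalDegree ≤ d)
    (z : (Fin n →₀ ℕ) → Fin n → ℝ) (hz : LwFeas d p z) (x : Fin n → ℝ) :
    eval (0 : Fin n → ℝ) p - lwObj d p z ≤ eval x p := by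
  classical
  obtain ⟨hz1, hz2, hz3⟩ := hz
  have hdne : d ≠ 0 := by omega
  have hsupp : ∀ α ∈ p.support, adeg α ≤ d := by
    intro α hα
    have h1 := MvPolynomial.le_totalDegree hα
    have h2 : (α.sum fun _ e => e) = adeg α := by
      rw [adeg, Finsupp.sum]
      exact Finset.sum_subset (Finset.subset_univ _)
        (fun i _ hi => Finsupp.notMem_support_iff.mp hi)
    omega
  set Bs : Finset (Fin n →₀ ℕ) :=
    insert 0 (Finset.image (fun i => Finsupp.single i d) Finset.univ) with hBs
  have hSB : p.support \ Bs = OmegaSet d p := by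
    ext α
    simp only [OmegaSet, pfilter, Finset.mem_filter, Finset.mem_sdiff, hBs,
      Finset.mem_insert, Finset.mem_image, Finset.mem_univ, true_and]
    constructor
    · rintro ⟨hα, hnot⟩
      push_neg at hnot
      exact ⟨hα, hsupp α hα, hnot.1, fun i h => (hnot.2 i) h.symm⟩
    · rintro ⟨hα, _, h0, hs⟩
      refine ⟨hα, ?_⟩
      push_neg
      exact ⟨h0, fun i h => (hs i) h.symm⟩
  have heval : eval x p = ∑ α ∈ p.support, p.coeff α * mono x α := by
    rw [MvPolynomial.eval_eq']
    rfl
  have hsplit : eval x p = (∑ α ∈ p.support ∩ Bs, p.coeff α * mono x α)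
      + ∑ α ∈ OmegaSet d p, p.coeff α * mono x α := by
    rw [heval, ← hSB, ← Finset.filter_mem_eq_inter, Finset.sdiff_eq_filter,
      Finset.sum_filter_add_sum_filter_not]
  have hIB : ∑ α ∈ p.support ∩ Bs, p.coeff α * mono x α
      = p.coeff 0 + ∑ i, p.coeff (Finsupp.single i d) * x i ^ d := by
    rw [Finset.sum_subset Finset.inter_subset_right (fun α hmem hnα => by
      have hns : α ∉ p.support := fun hs => hnα (Finset.mem_inter.mpr ⟨hs, hmem⟩)
      rw [MvPolynomial.notMem_support_iff.mp hns, zero_mul])]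
    rw [hBs, Finset.sum_insert, Finset.sum_image]
    · rw [mono_zero, mul_one]
      congr 1
      exact Finset.sum_congr rfl fun i _ => by rw [mono_single]
    · intro i _ j _ h
      exact (Finsupp.single_left_inj hdne).mp h
    · simp only [Finset.mem_image, Finset.mem_univ, true_and, not_exists]
      intro i h
      exact hdne (Finsupp.single_eq_zero.mp h)
  have hOmega : ∑ α ∈ OmegaSet d p, p.coeff α * mono x α
      = (∑ α ∈ DelSet d p, p.coeff α * mono x α)
        + ∑ α ∈ pfilter (OmegaSet d p)
            (fun α => ¬ ¬ IsSquare ((monomial α (p.coeff α)) : MvPolynomial (Fin n) ℝ)),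
            p.coeff α * mono x α := by
    rw [DelSet]
    exact (sum_pfilter_add (OmegaSet d p)
      (fun α => ¬ IsSquare ((monomial α (p.coeff α)) : MvPolynomial (Fin n) ℝ)) _).symm
  have hsq : 0 ≤ ∑ α ∈ pfilter (OmegaSet d p)
      (fun α => ¬ ¬ IsSquare ((monomial α (p.coeff α)) : MvPolynomial (Fin n) ℝ)),
      p.coeff α * mono x α := by
    apply Finset.sum_nonneg
    intro α hα
    rw [mem_pfilter] at hα
    obtain ⟨q, hq⟩ := not_not.mp hα.2
    have hev : p.coeff α * mono x α = eval x q * eval x q := by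
      have h1 : eval x ((monomial α (p.coeff α)) : MvPolynomial (Fin n) ℝ)
          = p.coeff α * mono x α := by
        rw [MvPolynomial.eval_monomial, mono]
        congr 1
        exact Finsupp.prod_fintype _ _ fun i => pow_zero _
      rw [← h1, hq, map_mul]
    rw [hev]
    exact mul_self_nonneg _
  -- bound on the Δ part
  have hmemΩ : ∀ α ∈ DelSet d p, adeg α ≤ d := by
    intro α hα
    rw [DelSet, mem_pfilter] at hα
    have h1 := hα.1
    rw [OmegaSet, mem_pfilter] at h1
    exact h1.2.1
  have hdel : ∀ α ∈ DelSet d p,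
      -((∑ i, z α i * x i ^ d) +
        (if adeg α < d then ((d : ℝ) - (adeg α : ℝ)) *
          (((p.coeff α / (d : ℝ)) ^ d * ∏ i, ((α i : ℝ) / z α i) ^ (α i)) ^
            ((1 : ℝ) / ((d : ℝ) - (adeg α : ℝ)))) else 0))
      ≤ p.coeff α * mono x α := by
    intro α hα
    have hkey := amgm_key hd2 hde α (hmemΩ α hα) (p.coeff α) (z α)
      (fun i => (hz1 α hα i).1) (fun i => (hz1 α hα i).2) (hz3 α hα) x
    have habs : |p.coeff α * mono x α| = |p.coeff α| * ∏ i, |x i| ^ α i := by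
      rw [abs_mul, mono, Finset.abs_prod]
      congr 1
      exact Finset.prod_congr rfl fun i _ => abs_pow _ _
    have h1 : -|p.coeff α * mono x α| ≤ p.coeff α * mono x α := neg_abs_le _
    rw [habs] at h1
    linarith
  have hdelsum :
      -((∑ α ∈ DelSet d p, ∑ i, z α i * x i ^ d) + lwObj d p z)
      ≤ ∑ α ∈ DelSet d p, p.coeff α * mono x α := by
    have hQ := sum_pfilter_add (DelSet d p) (fun α => adeg α < d)
      (fun α => p.coeff α * mono x α)
    have hZ := sum_pfilter_add (DelSet d p) (fun α => adeg α < d)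
      (fun α => ∑ i, z α i * x i ^ d)
    have hS1 : -((∑ α ∈ pfilter (DelSet d p) (fun α => adeg α < d), ∑ i, z α i * x i ^ d)
        + lwObj d p z)
        ≤ ∑ α ∈ pfilter (DelSet d p) (fun α => adeg α < d), p.coeff α * mono x α := by
      rw [lwObj, ← Finset.sum_add_distrib, ← Finset.sum_neg_distrib]
      apply Finset.sum_le_sum
      intro α hα
      have hmem := (mem_pfilter.mp hα).1
      have hlt := (mem_pfilter.mp hα).2
      have := hdel α hmem
      rw [if_pos hlt] at this
      exact this
    have hS2 : -(∑ α ∈ pfilter (DelSet d p) (fun α => ¬ adeg α < d), ∑ i, z α i * x i ^ d)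
        ≤ ∑ α ∈ pfilter (DelSet d p) (fun α => ¬ adeg α < d), p.coeff α * mono x α := by
      rw [← Finset.sum_neg_distrib]
      apply Finset.sum_le_sum
      intro α hα
      have hmem := (mem_pfilter.mp hα).1
      have hlt := (mem_pfilter.mp hα).2
      have := hdel α hmem
      rw [if_neg hlt, add_zero] at this
      exact this
    rw [← hQ, ← hZ]
    linarith
  have hzsum : ∑ α ∈ DelSet d p, ∑ i, z α i * x i ^ d
      ≤ ∑ i, p.coeff (Finsupp.single i d) * x i ^ d := by
    rw [Finset.sum_comm]
    apply Finset.sum_le_sum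
    intro i _
    rw [← Finset.sum_mul]
    exact mul_le_mul_of_nonneg_right (hz2 i) (hde.pow_nonneg _)
  have heval0 : eval (0 : Fin n → ℝ) p = p.coeff 0 := by
    have h1 : eval (0 : Fin n → ℝ) p = constantCoeff p :=
      congrFun (congrArg _ MvPolynomial.eval_zero) p
    rw [h1, MvPolynomial.constantCoeff_eq]
  rw [heval0, hsplit, hIB, hOmega]
  linarith
end Core


/-- For every `λ ∈ [0,∞)^m`, every feasible point `z` of (lw) for `G(λ)` and every `x̄ ∈ K_g`,
`f(x̄) ≥ G(λ)(0) − v(z)`; consequently `G(λ)_gp ≤ f(x̄)` and `s(f,g) ≤ inf {f(x̄) : x̄ ∈ K_g}`. -/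
theorem stmt1 {n m : ℕ} (hn : 1 ≤ n) (d : ℕ)
    (f : MvPolynomial (Fin n) ℝ) (g : Fin m → MvPolynomial (Fin n) ℝ)
    (hd2 : 2 ≤ d) (hde : Even d) (hdf : f.totalDegree ≤ d)
    (hdg : ∀ j, (g j).totalDegree ≤ d)
    (hdLeast : ∀ d' : ℕ, Even d' → 2 ≤ d' → f.totalDegree ≤ d' →
      (∀ j, (g j).totalDegree ≤ d') → d ≤ d') :
    (∀ lam : Fin m → ℝ, (∀ j, 0 ≤ lam j) →
      ∀ z, LwFeas d (polyG f g lam) z →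
      ∀ x : Fin n → ℝ, (∀ j, 0 ≤ eval x (g j)) →
        eval (0 : Fin n → ℝ) (polyG f g lam) - lwObj d (polyG f g lam) z ≤ eval x f) ∧
    (∀ lam : Fin m → ℝ, (∀ j, 0 ≤ lam j) →
      ∀ x : Fin n → ℝ, (∀ j, 0 ≤ eval x (g j)) →
        lwGp d (polyG f g lam) ≤ ((eval x f : ℝ) : EReal)) ∧
    (∀ x : Fin n → ℝ, (∀ j, 0 ≤ eval x (g j)) →
      sBound d f g ≤ ((eval x f : ℝ) : EReal)) := by
  have part1 : ∀ lam : Fin m → ℝ, (∀ j, 0 ≤ lam j) →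
      ∀ z, LwFeas d (polyG f g lam) z →
      ∀ x : Fin n → ℝ, (∀ j, 0 ≤ eval x (g j)) →
        eval (0 : Fin n → ℝ) (polyG f g lam) - lwObj d (polyG f g lam) z ≤ eval x f := by
    intro lam hlam z hz x hx
    have hdeg : (polyG f g lam).totalDegree ≤ d := by
      refine le_trans (MvPolynomial.totalDegree_sub _ _) (max_le hdf ?_)
      refine le_trans (MvPolynomial.totalDegree_finset_sum _ _) ?_
      apply Finset.sup_le
      intro j _
      refine le_trans (MvPolynomial.totalDegree_mul _ _) ?_
      rw [MvPolynomial.totalDegree_C, zero_add]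
      exact hdg j
    have h1 := core_bound hd2 hde (polyG f g lam) hdeg z hz x
    have h2 : eval x (polyG f g lam) ≤ eval x f := by
      have heq : eval x (polyG f g lam) = eval x f - ∑ j, lam j * eval x (g j) := by
        simp [polyG]
      rw [heq]
      have h3 : 0 ≤ ∑ j, lam j * eval x (g j) :=
        Finset.sum_nonneg fun j _ => mul_nonneg (hlam j) (hx j)
      linarith
    linarith
  have part2 : ∀ lam : Fin m → ℝ, (∀ j, 0 ≤ lam j) →
      ∀ x : Fin n → ℝ, (∀ j, 0 ≤ eval x (g j)) →
        lwGp d (polyG f g lam) ≤ ((eval x f : ℝ) : EReal) := by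
    intro lam hlam x hx
    have h1 : ((eval (0 : Fin n → ℝ) (polyG f g lam) - eval x f : ℝ) : EReal)
        ≤ lwRho d (polyG f g lam) := by
      rw [lwRho]
      apply le_sInf
      rintro b ⟨z, hzf, rfl⟩
      show ((eval (0 : Fin n → ℝ) (polyG f g lam) - eval x f : ℝ) : EReal)
          ≤ ((lwObj d (polyG f g lam) z : ℝ) : EReal)
      have h0 := part1 lam hlam z hzf x hx
      exact_mod_cast (by linarith :
        eval (0 : Fin n → ℝ) (polyG f g lam) - eval x f ≤ lwObj d (polyG f g lam) z)
    rw [lwGp]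
    calc ((eval (0 : Fin n → ℝ) (polyG f g lam) : ℝ) : EReal) - lwRho d (polyG f g lam)
        ≤ ((eval (0 : Fin n → ℝ) (polyG f g lam) : ℝ) : EReal)
          - ((eval (0 : Fin n → ℝ) (polyG f g lam) - eval x f : ℝ) : EReal) :=
          EReal.sub_le_sub le_rfl h1
      _ = ((eval x f : ℝ) : EReal) := by
          rw [← EReal.coe_sub]
          norm_cast
          ring
  refine ⟨part1, part2, ?_⟩
  intro x hx
  apply sSup_le
  rintro b ⟨lam, hlam, rfl⟩
  exact part2 lam hlam x hx
end
end

section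
/- For every λ ∈ [0,∞)^m and every feasible point z of program (lw) for G(λ), there exist sums of squares σ₀, σ₁, …, σ_m ∈ ∑ℝ[x]² with deg σ₀ ≤ d and deg(σ_j g_j) ≤ d for j = 1,…,m such that f − (G(λ)(0) − v(z)) = σ₀ + ∑_{j=1}^m σ_j g_j. Consequently G(λ)_gp ≤ f_sos^{(d)} := sup{r ∈ ℝ : f − r = ∑_{j=0}^m σ_j g_j with g₀ := 1, σ_j ∈ ∑ℝ[x]², deg(σ_j g_j) ≤ d for all j}, and hence s(f,g) ≤ f_sos^{(d)}. -/
open MvPolynomial Finset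

noncomputable section

/-- `p` is a sum of squares of polynomials. -/
def IsSOS {n : ℕ} (p : MvPolynomial (Fin n) ℝ) : Prop :=
  ∃ (k : ℕ) (q : Fin k → MvPolynomial (Fin n) ℝ), p = ∑ t, q t ^ 2

namespace SOSAux

variable {n : ℕ}

lemma sos_zero : IsSOS (0 : MvPolynomial (Fin n) ℝ) := ⟨0, ![], by simp⟩

lemma sos_sq (q : MvPolynomial (Fin n) ℝ) : IsSOS (q ^ 2) := ⟨1, ![q], by simp⟩

lemma sos_add {p q : MvPolynomial (Fin n) ℝ} (hp : IsSOS p) (hq : IsSOS q) :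
    IsSOS (p + q) := by
  obtain ⟨k1, u, hu⟩ := hp
  obtain ⟨k2, v, hv⟩ := hq
  refine ⟨k1 + k2, Fin.append u v, ?_⟩
  rw [Fin.sum_univ_add]
  simp [hu, hv]

lemma sos_sum {ι : Type*} (s : Finset ι) (F : ι → MvPolynomial (Fin n) ℝ)
    (h : ∀ i ∈ s, IsSOS (F i)) : IsSOS (∑ i ∈ s, F i) := by
  classical
  induction s using Finset.induction_on with
  | empty => simpa using sos_zero
  | insert _ _ hx ih =>
    rw [Finset.sum_insert hx]
    exact sos_add (h _ (Finset.mem_insert_self _ _))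
      (ih fun i hi => h i (Finset.mem_insert_of_mem hi))

lemma sos_Cmul {c : ℝ} (hc : 0 ≤ c) {p : MvPolynomial (Fin n) ℝ} (hp : IsSOS p) :
    IsSOS (C c * p) := by
  obtain ⟨k, u, hu⟩ := hp
  refine ⟨k, fun t => C (Real.sqrt c) * u t, ?_⟩
  subst hu
  rw [Finset.mul_sum]
  refine Finset.sum_congr rfl fun t _ => ?_
  rw [mul_pow, ← C_pow, Real.sq_sqrt hc]

lemma sos_C {c : ℝ} (hc : 0 ≤ c) : IsSOS (C c : MvPolynomial (Fin n) ℝ) := by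
  have := sos_Cmul hc (sos_sq (1 : MvPolynomial (Fin n) ℝ))
  simpa using this

lemma sos_isSquare {p : MvPolynomial (Fin n) ℝ} (hp : IsSquare p) : IsSOS p := by
  obtain ⟨r, hr⟩ := hp
  rw [hr, ← sq]
  exact sos_sq r

lemma sos_map {N : ℕ} (φ : MvPolynomial (Fin N) ℝ →ₐ[ℝ] MvPolynomial (Fin n) ℝ)
    {p : MvPolynomial (Fin N) ℝ} (hp : IsSOS p) : IsSOS (φ p) := by
  obtain ⟨k, u, hu⟩ := hp
  exact ⟨k, fun t => φ (u t), by simp [hu]⟩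

/-- Discrete convexity segment lemma. -/
lemma seg (B : ℕ → MvPolynomial (Fin n) ℝ) (L t : ℕ) (ht : t ≤ L)
    (hs : ∀ k, k + 2 ≤ L → IsSOS (B (k + 2) + B k - 2 * B (k + 1))) :
    IsSOS (C ((L : ℝ) - t) * B 0 + C (t : ℝ) * B L - C (L : ℝ) * B t) := by
  set D : ℕ → MvPolynomial (Fin n) ℝ := fun k => B (k + 1) - B k with hD
  have DD : ∀ a c, a ≤ c → c + 1 ≤ L → IsSOS (D c - D a) := by
    intro a c hac
    induction c, hac using Nat.le_induction with
    | base => intro _; simpa using sos_zero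
    | succ c hac ih =>
      intro hcL
      have h1 : D (c + 1) - D a = (B (c + 2) + B c - 2 * B (c + 1)) + (D c - D a) := by
        simp only [hD]; ring
      rw [h1]
      exact sos_add (hs c hcL) (ih (by omega))
  have key : IsSOS (∑ k' ∈ Finset.range t, ∑ k ∈ Finset.Ico t L, (D k - D k')) := by
    refine sos_sum _ _ fun k' hk' => sos_sum _ _ fun k hk => ?_
    rw [Finset.mem_range] at hk'
    rw [Finset.mem_Ico] at hk
    exact DD k' k (by omega) (by omega)
  have e1 : ∑ k ∈ Finset.Ico t L, D k = B L - B t := by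
    rw [Finset.sum_Ico_eq_sub _ ht, Finset.sum_range_sub, Finset.sum_range_sub]; abel
  have e2 : ∑ k ∈ Finset.range t, D k = B t - B 0 := Finset.sum_range_sub _ _
  have idt : ∑ k' ∈ Finset.range t, ∑ k ∈ Finset.Ico t L, (D k - D k')
      = C ((L : ℝ) - t) * B 0 + C (t : ℝ) * B L - C (L : ℝ) * B t := by
    have e3 : ∀ k', ∑ k ∈ Finset.Ico t L, (D k - D k')
        = (B L - B t) - (L - t : ℕ) • D k' := by
      intro k'
      rw [Finset.sum_sub_distrib, e1, Finset.sum_const, Nat.card_Ico]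
    simp only [e3]
    rw [Finset.sum_sub_distrib, Finset.sum_const, Finset.card_range, ← Finset.smul_sum, e2]
    have cL : (C ((L : ℝ) - t) : MvPolynomial (Fin n) ℝ) = C (L : ℝ) - C (t : ℝ) := by
      rw [map_sub]
    have hsm : ∀ (a : ℕ) (x : MvPolynomial (Fin n) ℝ), a • x = C (a : ℝ) * x := by
      intro a x
      rw [← Nat.cast_smul_eq_nsmul ℝ, smul_eq_C_mul]
    rw [hsm, hsm]
    push_cast [Nat.cast_sub ht]
    rw [cL]
    ring
  rw [← idt]; exact key


lemma evenQ (s : ℕ) (h : Fin s → MvPolynomial (Fin n) ℝ) (b : Fin s → ℕ) :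
    IsSOS (∑ t, C (b t : ℝ) * (h t ^ 2) ^ (∑ r, b r)
      - C ((∑ r, b r : ℕ) : ℝ) * ∏ t, (h t ^ 2) ^ b t) := by
  classical
  set q : Fin s → MvPolynomial (Fin n) ℝ := fun t => h t ^ 2 with hq
  suffices H : ∀ ν : ℕ, ∀ b : Fin s → ℕ, (univ.filter (fun t => b t ≠ 0)).card ≤ ν →
      IsSOS (∑ t, C (b t : ℝ) * q t ^ (∑ r, b r)
        - C ((∑ r, b r : ℕ) : ℝ) * ∏ t, q t ^ b t) by
    exact H _ b le_rfl
  intro ν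
  induction ν with
  | zero =>
    intro b hb0
    have hb : ∀ t, b t = 0 := by
      intro t
      by_contra hbt
      have : t ∈ univ.filter (fun t => b t ≠ 0) := by simp [hbt]
      have := Finset.card_pos.mpr ⟨t, this⟩
      omega
    have hm : ∑ r, b r = 0 := Finset.sum_eq_zero fun t _ => hb t
    have : (∑ t, C (b t : ℝ) * q t ^ (∑ r, b r)
        - C ((∑ r, b r : ℕ) : ℝ) * ∏ t, q t ^ b t) = 0 := by
      simp [hm, hb]
    rw [this]; exact sos_zero
  | succ ν IH =>
    intro b hb0
    by_cases hpair : ∃ i j, i ≠ j ∧ b i ≠ 0 ∧ b j ≠ 0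
    · obtain ⟨i, j, hij, hbi, hbj⟩ := hpair
      set m : ℕ := ∑ r, b r with hm
      set L : ℕ := b i + b j with hL
      have hLpos : 0 < L := by omega
      set E1 : Fin s → ℕ := Function.update (Function.update b i 0) j L with hE1
      set E2 : Fin s → ℕ := Function.update (Function.update b j 0) i L with hE2
      have hE1i : E1 i = 0 := by
        simp [hE1, Function.update_of_ne hij, Function.update_self]
      have hE1j : E1 j = L := by simp [hE1, Function.update_self]
      have hE1t : ∀ t, t ≠ i → t ≠ j → E1 t = b t := by
        intro t hti htj
        simp [hE1, Function.update_of_ne htj, Function.update_of_ne hti]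
      have hE2i : E2 i = L := by simp [hE2, Function.update_self]
      have hE2j : E2 j = 0 := by
        simp [hE2, Function.update_of_ne hij.symm, Function.update_self]
      have hE2t : ∀ t, t ≠ i → t ≠ j → E2 t = b t := by
        intro t hti htj
        simp [hE2, Function.update_of_ne hti, Function.update_of_ne htj]
      have hjmem : j ∈ univ.erase i := by simp [hij.symm]
      -- decomposition of sums and products
      have sdecomp : ∀ c : Fin s → ℕ,
          (∑ t, c t) = c i + (c j + ∑ t ∈ (univ.erase i).erase j, c t) := by
        intro c
        rw [Finset.add_sum_erase _ c hjmem, Finset.add_sum_erase _ c (Finset.mem_univ i)]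
      have pdecomp : ∀ c : Fin s → ℕ,
          (∏ t, q t ^ c t)
            = q i ^ c i * (q j ^ c j * ∏ t ∈ (univ.erase i).erase j, q t ^ c t) := by
        intro c
        rw [Finset.mul_prod_erase _ (fun t => q t ^ c t) hjmem,
          Finset.mul_prod_erase _ (fun t => q t ^ c t) (Finset.mem_univ i)]
      have rcongr : ∀ (c : Fin s → ℕ), (∀ t, t ≠ i → t ≠ j → c t = b t) →
          ∑ t ∈ (univ.erase i).erase j, c t = ∑ t ∈ (univ.erase i).erase j, b t ∧
          (∏ t ∈ (univ.erase i).erase j, q t ^ c t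
            = ∏ t ∈ (univ.erase i).erase j, q t ^ b t) := by
        intro c hc
        constructor
        · refine Finset.sum_congr rfl fun t htm => ?_
          simp only [Finset.mem_erase] at htm
          exact hc t htm.2.1 htm.1
        · refine Finset.prod_congr rfl fun t htm => ?_
          simp only [Finset.mem_erase] at htm
          rw [hc t htm.2.1 htm.1]
      have sumE1 : ∑ r, E1 r = m := by
        rw [sdecomp E1, hE1i, hE1j, (rcongr E1 hE1t).1, hm, sdecomp b, hL]
        omega
      have sumE2 : ∑ r, E2 r = m := by
        rw [sdecomp E2, hE2i, hE2j, (rcongr E2 hE2t).1, hm, sdecomp b, hL]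
        omega
      -- cardinality decrease
      have cardlt : ∀ (c : Fin s → ℕ) (k k' : Fin s), c k = 0 → b k ≠ 0 → b k' ≠ 0 →
          (∀ t, t ≠ k → t ≠ k' → c t = b t) →
          (univ.filter (fun t => c t ≠ 0)).card ≤ ν := by
        intro c k k' hck hbk hbk' hc
        have hsub : univ.filter (fun t => c t ≠ 0)
            ⊆ (univ.filter (fun t => b t ≠ 0)).erase k := by
          intro t htm
          simp only [Finset.mem_filter, Finset.mem_univ, true_and] at htm
          have htk : t ≠ k := by rintro rfl; exact htm hck
          by_cases htk' : t = k'
          · subst htk'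
            simp [Finset.mem_erase, htk, hbk']
          · rw [hc t htk htk'] at htm
            simp [Finset.mem_erase, htk, htm]
        have hkmem : k ∈ univ.filter (fun t => b t ≠ 0) := by simp [hbk]
        have := Finset.card_le_card hsub
        rw [Finset.card_erase_of_mem hkmem] at this
        omega
      have IH1 := IH E1 (cardlt E1 i j hE1i hbi hbj hE1t)
      have IH2 := IH E2 (cardlt E2 j i hE2j hbj hbi (fun t h1 h2 => hE2t t h2 h1))
      set R2 : MvPolynomial (Fin n) ℝ := ∏ t ∈ (univ.erase i).erase j, q t ^ b t with hR2
      set S : MvPolynomial (Fin n) ℝ := ∏ t ∈ (univ.erase i).erase j, h t ^ b t with hS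
      have hR2S : R2 = S ^ 2 := by
        rw [hR2, hS, ← Finset.prod_pow]
        exact Finset.prod_congr rfl fun t _ => pow_right_comm (h t) 2 (b t)
      set B : ℕ → MvPolynomial (Fin n) ℝ := fun k => q i ^ k * q j ^ (L - k) * R2 with hB
      have hs : ∀ k, k + 2 ≤ L → IsSOS (B (k + 2) + B k - 2 * B (k + 1)) := by
        intro k hk
        obtain ⟨r, hr⟩ : ∃ r, L = k + 2 + r := ⟨L - (k + 2), by omega⟩
        have h1 : L - (k + 2) = r := by omega
        have h2 : L - k = r + 2 := by omega
        have h3 : L - (k + 1) = r + 1 := by omega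
        have e : B (k + 2) + B k - 2 * B (k + 1)
            = ((h i ^ 2 - h j ^ 2) * (h i ^ k * h j ^ r * S)) ^ 2 := by
          simp only [hB, h1, h2, h3, hR2S, hq]
          ring
        rw [e]
        exact sos_sq _
      have hseg := seg B L (b i) (by omega) hs
      have P1 : ∏ t, q t ^ E1 t = B 0 := by
        rw [pdecomp E1, hE1i, hE1j, (rcongr E1 hE1t).2]
        simp only [hB, pow_zero, Nat.sub_zero]
        ring
      have P2 : ∏ t, q t ^ E2 t = B L := by
        rw [pdecomp E2, hE2i, hE2j, (rcongr E2 hE2t).2]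
        simp only [hB, pow_zero, Nat.sub_self]
        ring
      have P3 : ∏ t, q t ^ b t = B (b i) := by
        have hLb : L - b i = b j := by omega
        rw [pdecomp b]
        simp only [hB, hLb]
        ring
      rw [sumE1, P1] at IH1
      rw [sumE2, P2] at IH2
      have hdiag : C (L : ℝ) * ∑ t, C (b t : ℝ) * q t ^ m
          = C (b j : ℝ) * ∑ t, C (E1 t : ℝ) * q t ^ m
            + C (b i : ℝ) * ∑ t, C (E2 t : ℝ) * q t ^ m := by
        rw [Finset.mul_sum, Finset.mul_sum, Finset.mul_sum, ← Finset.sum_add_distrib]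
        refine Finset.sum_congr rfl fun t _ => ?_
        have hco : (L : ℝ) * b t = (b j : ℝ) * E1 t + (b i : ℝ) * E2 t := by
          rcases eq_or_ne t i with rfl | hti
          · rw [hE1i, hE2i]; push_cast [hL]; ring
          · rcases eq_or_ne t j with rfl | htj
            · rw [hE1j, hE2j]; push_cast [hL]; ring
            · rw [hE1t t hti htj, hE2t t hti htj]; push_cast [hL]; ring
        simp only [← mul_assoc, ← C_mul]
        rw [← add_mul, ← C_add, hco]
      have hfinal : C (L : ℝ) * (∑ t, C (b t : ℝ) * q t ^ m - C (m : ℝ) * B (b i))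
          = C (b j : ℝ) * (∑ t, C (E1 t : ℝ) * q t ^ m - C (m : ℝ) * B 0)
          + C (b i : ℝ) * (∑ t, C (E2 t : ℝ) * q t ^ m - C (m : ℝ) * B L)
          + C (m : ℝ) * (C ((L : ℝ) - b i) * B 0 + C (b i : ℝ) * B L
              - C (L : ℝ) * B (b i)) := by
        have hLbi : ((L : ℝ) - b i) = (b j : ℝ) := by push_cast [hL]; ring
        rw [mul_sub, hdiag, hLbi]
        ring
      have hLne : ((L : ℝ)) ≠ 0 := by
        have : (0:ℝ) < (L:ℝ) := by exact_mod_cast hLpos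
        exact this.ne'
      have target_eq : (∑ t, C (b t : ℝ) * q t ^ m - C ((m : ℕ) : ℝ) * ∏ t, q t ^ b t)
          = C ((L : ℝ)⁻¹) * (C (L : ℝ)
            * (∑ t, C (b t : ℝ) * q t ^ m - C (m : ℝ) * B (b i))) := by
        rw [← mul_assoc, ← C_mul, inv_mul_cancel₀ hLne, C_1, one_mul, P3]
      rw [target_eq, hfinal]
      refine sos_Cmul (by positivity) (sos_add (sos_add ?_ ?_) ?_)
      · exact sos_Cmul (Nat.cast_nonneg _) IH1
      · exact sos_Cmul (Nat.cast_nonneg _) IH2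
      · exact sos_Cmul (Nat.cast_nonneg _) hseg
    · -- at most one nonzero entry
      push_neg at hpair
      by_cases hz : ∀ t, b t = 0
      · have hm : ∑ r, b r = 0 := Finset.sum_eq_zero fun t _ => hz t
        have : (∑ t, C (b t : ℝ) * q t ^ (∑ r, b r)
            - C ((∑ r, b r : ℕ) : ℝ) * ∏ t, q t ^ b t) = 0 := by
          simp [hm, hz]
        rw [this]; exact sos_zero
      · push_neg at hz
        obtain ⟨i, hbi⟩ := hz
        have huniq : ∀ t, t ≠ i → b t = 0 := by
          intro t hti
          by_contra hbt
          exact hbi (hpair t i hti hbt)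
        have hm : ∑ r, b r = b i := by
          rw [Finset.sum_eq_single i (fun t _ hti => huniq t hti) (by simp)]
        have e1 : ∑ t, C (b t : ℝ) * q t ^ (∑ r, b r) = C (b i : ℝ) * q i ^ (b i) := by
          rw [hm]
          exact Finset.sum_eq_single i
            (fun t _ hti => by rw [huniq t hti]; simp) (by simp)
        have e2 : ∏ t, q t ^ b t = q i ^ b i :=
          Finset.prod_eq_single i (fun t _ hti => by rw [huniq t hti, pow_zero]) (by simp)
        rw [e1, e2, hm, sub_self]
        exact sos_zero


lemma split_exists (N : ℕ) (γ : Fin N → ℕ) (k : ℕ) (hk : k ≤ ∑ i, γ i) :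
    ∃ a : Fin N → ℕ, (∀ i, a i ≤ γ i) ∧ ∑ i, a i = k := by
  induction k with
  | zero => exact ⟨fun _ => 0, fun i => Nat.zero_le _, by simp⟩
  | succ k ih =>
    obtain ⟨a, ha, hsa⟩ := ih (by omega)
    have hex : ∃ i, a i < γ i := by
      by_contra hno
      push_neg at hno
      have : ∑ i, γ i ≤ ∑ i, a i := Finset.sum_le_sum fun i _ => hno i
      omega
    obtain ⟨i, hi⟩ := hex
    refine ⟨Function.update a i (a i + 1), ?_, ?_⟩
    · intro t
      rcases eq_or_ne t i with rfl | hti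
      · rw [Function.update_self]; omega
      · rw [Function.update_of_ne hti]; exact ha t
    · rw [Finset.sum_update_of_mem (Finset.mem_univ i)]
      have : ∑ t, a t = a i + ∑ t ∈ univ \ {i}, a t := by
        rw [Finset.sum_eq_add_sum_sdiff_singleton_of_mem (Finset.mem_univ i)]
      omega

lemma agm {N : ℕ} (d : ℕ) (hde : Even d) (γ : Fin N → ℕ) (hγ : ∑ i, γ i = d)
    (ε : ℝ) (hε : ε = 1 ∨ ε = -1) :
    IsSOS (∑ i, C (γ i : ℝ) * X i ^ d - C (ε * d) * ∏ i, X i ^ γ i) := by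
  obtain ⟨mm, hmm⟩ := hde
  obtain ⟨a, ha, hsa⟩ := split_exists N γ mm (by omega)
  set bb : Fin N → ℕ := fun i => γ i - a i with hbb
  have hab : ∀ i, a i + bb i = γ i := by
    intro i
    have := ha i
    simp only [hbb]
    omega
  have hsb : ∑ i, bb i = mm := by
    have h1 : ∑ i, (a i + bb i) = d := by
      rw [Finset.sum_congr rfl fun i _ => hab i, hγ]
    rw [Finset.sum_add_distrib, hsa] at h1
    omega
  have Qa := evenQ N X a
  have Qb := evenQ N X bb
  rw [hsa] at Qa
  rw [hsb] at Qb
  set A : MvPolynomial (Fin N) ℝ := ∏ i, X i ^ a i with hA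
  set Bb : MvPolynomial (Fin N) ℝ := ∏ i, X i ^ bb i with hBb
  have hXd : ∀ i : Fin N, (((X i : MvPolynomial (Fin N) ℝ)) ^ 2) ^ mm = X i ^ d := by
    intro i
    rw [← pow_mul]
    congr 1
    omega
  have hPA : (∏ i, (((X i : MvPolynomial (Fin N) ℝ)) ^ 2) ^ a i) = A ^ 2 := by
    rw [hA, ← Finset.prod_pow]
    exact Finset.prod_congr rfl fun i _ => pow_right_comm _ _ _
  have hPB : (∏ i, (((X i : MvPolynomial (Fin N) ℝ)) ^ 2) ^ bb i) = Bb ^ 2 := by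
    rw [hBb, ← Finset.prod_pow]
    exact Finset.prod_congr rfl fun i _ => pow_right_comm _ _ _
  simp only [hXd, hPA, hPB] at Qa Qb
  have hABb : A * Bb = ∏ i, X i ^ γ i := by
    rw [hA, hBb, ← Finset.prod_mul_distrib]
    exact Finset.prod_congr rfl fun i _ => by rw [← pow_add, hab i]
  have hsplit : ∑ i, C (γ i : ℝ) * (X i : MvPolynomial (Fin N) ℝ) ^ d
      = ∑ i, C (a i : ℝ) * X i ^ d + ∑ i, C (bb i : ℝ) * X i ^ d := by
    rw [← Finset.sum_add_distrib]
    refine Finset.sum_congr rfl fun i _ => ?_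
    rw [← add_mul, ← C_add]
    congr 2
    exact_mod_cast (hab i).symm
  have hCd : (C ((mm : ℕ) : ℝ) : MvPolynomial (Fin N) ℝ) * 2 = C ((d : ℕ) : ℝ) := by
    have hd2 : ((d : ℕ) : ℝ) = ((mm : ℕ) : ℝ) * 2 := by push_cast [hmm]; ring
    rw [hd2, C_mul, map_ofNat]
  have key : ∑ i, C (γ i : ℝ) * (X i : MvPolynomial (Fin N) ℝ) ^ d
        - C (ε * d) * ∏ i, X i ^ γ i
      = (∑ i, C (a i : ℝ) * X i ^ d - C ((mm : ℕ) : ℝ) * A ^ 2)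
        + (∑ i, C (bb i : ℝ) * X i ^ d - C ((mm : ℕ) : ℝ) * Bb ^ 2)
        + C ((mm : ℕ) : ℝ) * (A - C ε * Bb) ^ 2 := by
    have hCe : (C ε : MvPolynomial (Fin N) ℝ) ^ 2 = 1 := by
      rw [← C_pow]
      rcases hε with rfl | rfl <;> norm_num
    have hCed : (C (ε * d) : MvPolynomial (Fin N) ℝ) = C ε * C ((d : ℕ) : ℝ) := by
      rw [← C_mul]
    rw [hsplit, ← hABb, hCed, ← hCd]
    ring_nf
    rw [show (C ε : MvPolynomial (Fin N) ℝ) ^ 2 = 1 from hCe]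
    ring
  rw [key]
  exact sos_add (sos_add Qa Qb)
    (sos_Cmul (Nat.cast_nonneg _) (sos_sq _))


lemma rpow_inv_pow {x : ℝ} (hx : 0 ≤ x) {d : ℕ} (hd : d ≠ 0) :
    (x ^ ((d : ℝ)⁻¹)) ^ d = x := by
  rw [← Real.rpow_natCast (x ^ ((d : ℝ)⁻¹)) d, ← Real.rpow_mul hx,
    inv_mul_cancel₀ (by exact_mod_cast hd), Real.rpow_one]

lemma cert {n : ℕ} (d e : ℕ) (hde : Even d) (hd0 : d ≠ 0) (α : Fin n → ℕ)
    (he : ∑ i, α i = e) (hed : e ≤ d)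
    (c t : ℝ) (z : Fin n → ℝ) (hz0 : ∀ i, 0 ≤ z i) (hziff : ∀ i, z i = 0 ↔ α i = 0)
    (ht : 0 ≤ t)
    (heq : (c / d) ^ d = t ^ (d - e) * ∏ i, (z i / (α i : ℝ)) ^ (α i)) :
    IsSOS (C c * (∏ i, (X i : MvPolynomial (Fin n) ℝ) ^ α i)
      + ∑ i, C (z i) * X i ^ d + C (((d : ℝ) - e) * t)) := by
  classical
  set lam : Fin n → ℝ := fun i => if α i = 0 then 0 else (z i / α i) ^ ((d : ℝ)⁻¹)
    with hlam
  set μ : ℝ := t ^ ((d : ℝ)⁻¹) with hμ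
  have hlamnn : ∀ i, 0 ≤ lam i := by
    intro i
    simp only [hlam]
    split
    · exact le_refl 0
    · exact Real.rpow_nonneg (div_nonneg (hz0 i) (Nat.cast_nonneg _)) _
  have hμnn : 0 ≤ μ := Real.rpow_nonneg ht _
  have hlamd : ∀ i, α i ≠ 0 → (lam i) ^ d = z i / α i := by
    intro i hi
    simp only [hlam, if_neg hi]
    exact rpow_inv_pow (div_nonneg (hz0 i) (Nat.cast_nonneg _)) hd0
  have hμd : μ ^ d = t := rpow_inv_pow ht hd0
  set γ : Fin (n + 1) → ℕ := Fin.snoc α (d - e) with hγ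
  have hγs : ∑ k, γ k = d := by
    rw [Fin.sum_univ_castSucc]
    simp only [hγ, Fin.snoc_castSucc, Fin.snoc_last, he]
    omega
  set ε : ℝ := if 0 ≤ c then (-1 : ℝ) else 1 with hε
  have hε1 : ε = 1 ∨ ε = -1 := by
    simp only [hε]; split <;> simp
  have hsos := agm d hde γ hγs ε hε1
  set f : Fin (n + 1) → MvPolynomial (Fin n) ℝ :=
    Fin.snoc (fun i : Fin n => C (lam i) * X i) (C μ) with hf
  set φ : MvPolynomial (Fin (n + 1)) ℝ →ₐ[ℝ] MvPolynomial (Fin n) ℝ := aeval f with hφ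
  have himg := sos_map φ hsos
  -- the scalar K
  set K : ℝ := d * ((∏ i, lam i ^ α i) * μ ^ (d - e)) with hK
  have hKnn : 0 ≤ K := by
    refine mul_nonneg (Nat.cast_nonneg _) (mul_nonneg ?_ (pow_nonneg hμnn _))
    exact Finset.prod_nonneg fun i _ => pow_nonneg (hlamnn i) _
  have hKd : K ^ d = c ^ d := by
    have h1 : (∏ i, lam i ^ α i) ^ d = ∏ i, (z i / α i) ^ α i := by
      rw [← Finset.prod_pow]
      refine Finset.prod_congr rfl fun i _ => ?_
      rcases eq_or_ne (α i) 0 with h0 | h0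
      · rw [h0, pow_zero, one_pow, pow_zero]
      · rw [pow_right_comm, hlamd i h0]
    have h2 : (μ ^ (d - e)) ^ d = t ^ (d - e) := by
      rw [pow_right_comm, hμd]
    have hdne : ((d : ℝ)) ≠ 0 := by exact_mod_cast hd0
    calc K ^ d = (d : ℝ) ^ d * ((∏ i, lam i ^ α i) ^ d * (μ ^ (d - e)) ^ d) := by
          rw [hK, mul_pow, mul_pow]
      _ = (d : ℝ) ^ d * (t ^ (d - e) * ∏ i, (z i / α i) ^ α i) := by
          rw [h1, h2]; ring
      _ = (d : ℝ) ^ d * (c / d) ^ d := by rw [heq]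
      _ = c ^ d := by
          rw [div_pow]
          field_simp
  have habs : K = |c| := by
    have : K ^ d = |c| ^ d := by rw [hKd, hde.pow_abs]
    exact (pow_left_inj₀ hKnn (abs_nonneg c) hd0).mp this
  have hc : -(ε * K) = c := by
    rw [habs, hε]
    split
    · simp only [neg_mul, one_mul, neg_neg]
      rw [abs_of_nonneg (by assumption)]
    · push_neg at *
      rw [abs_of_neg (by assumption)]
      ring
  -- compute the image
  have hφeq : φ (∑ k, C ((γ k : ℕ) : ℝ) * X k ^ d - C (ε * d) * ∏ k, X k ^ γ k)
      = C c * (∏ i, (X i : MvPolynomial (Fin n) ℝ) ^ α i)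
        + ∑ i, C (z i) * X i ^ d + C (((d : ℝ) - e) * t) := by
    have haevalC : ∀ r : ℝ, φ (C r) = C r := fun r => by
      simp [hφ, aeval_C, algebraMap_eq]
    have haevalX : ∀ k, φ (X k) = f k := fun k => by simp [hφ]
    rw [map_sub, map_sum]
    have hterm : ∀ k, φ (C ((γ k : ℕ) : ℝ) * X k ^ d) = C ((γ k : ℕ) : ℝ) * f k ^ d := by
      intro k
      rw [map_mul, map_pow, haevalC, haevalX]
    rw [Finset.sum_congr rfl fun k _ => hterm k]
    rw [map_mul, map_prod, haevalC]
    have hprodterm : ∀ k, φ (X k ^ γ k) = f k ^ γ k := fun k => by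
      rw [map_pow, haevalX]
    rw [Finset.prod_congr rfl fun k _ => hprodterm k]
    rw [Fin.sum_univ_castSucc, Fin.prod_univ_castSucc]
    simp only [hf, hγ, Fin.snoc_castSucc, Fin.snoc_last]
    have hdiag : ∀ i : Fin n,
        C ((α i : ℕ) : ℝ) * (C (lam i) * X i) ^ d = C (z i) * X i ^ d := by
      intro i
      rw [mul_pow, ← C_pow, ← mul_assoc, ← C_mul]
      rcases eq_or_ne (α i) 0 with h0 | h0
      · have hz : z i = 0 := (hziff i).mpr h0
        rw [h0, hz]
        simp
      · rw [hlamd i h0]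
        congr 2
        have hα : ((α i : ℕ) : ℝ) ≠ 0 := by exact_mod_cast h0
        field_simp
    rw [Finset.sum_congr rfl fun i _ => hdiag i]
    have hconst : C (((d - e : ℕ) : ℕ) : ℝ) * (C μ : MvPolynomial (Fin n) ℝ) ^ d
        = C (((d : ℝ) - e) * t) := by
      rw [← C_pow, ← C_mul, hμd]
      congr 1
      rw [Nat.cast_sub hed]
    rw [hconst]
    have hmono : (∏ i, (C (lam i) * X i) ^ α i) * (C μ) ^ (d - e)
        = C ((∏ i, lam i ^ α i) * μ ^ (d - e)) * ∏ i, (X i : MvPolynomial (Fin n) ℝ) ^ α i := by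
      have : ∀ i : Fin n, (C (lam i) * X i) ^ α i
          = C (lam i ^ α i) * (X i : MvPolynomial (Fin n) ℝ) ^ α i := by
        intro i
        rw [mul_pow, C_pow]
      rw [Finset.prod_congr rfl fun i _ => this i, Finset.prod_mul_distrib, ← map_prod,
        ← C_pow, C_mul]
      ring
    rw [hmono]
    rw [← mul_assoc, ← C_mul]
    have : -(ε * ((d : ℝ)) * ((∏ i, lam i ^ α i) * μ ^ (d - e))) = c := by
      rw [← hc, hK]
      ring
    rw [show (ε * ((d : ℕ) : ℝ)) * ((∏ i, lam i ^ α i) * μ ^ (d - e)) = -c by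
      rw [← this]; push_cast; ring]
    rw [map_neg, neg_mul]
    ring
  rw [hφeq] at himg
  exact himg

end SOSAux


namespace SOSAux

variable {n : ℕ}

lemma mem_pfilter {β : Type*} {s : Finset β} {q : β → Prop} {a : β} :
    a ∈ pfilter s q ↔ a ∈ s ∧ q a :=
  @Finset.mem_filter _ _ (fun _ => Classical.propDecidable _) _ _

lemma mem_Omega {d : ℕ} {p : MvPolynomial (Fin n) ℝ} {α : Fin n →₀ ℕ} :
    α ∈ OmegaSet d p ↔ α ∈ p.support ∧ adeg α ≤ d ∧ α ≠ 0 ∧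
      ∀ i, α ≠ Finsupp.single i d := by
  simp [OmegaSet, pfilter, Finset.mem_filter, and_assoc]

lemma mem_Del {d : ℕ} {p : MvPolynomial (Fin n) ℝ} {α : Fin n →₀ ℕ} :
    α ∈ DelSet d p ↔ α ∈ OmegaSet d p ∧
      ¬ IsSquare ((monomial α (p.coeff α)) : MvPolynomial (Fin n) ℝ) := by
  simp [DelSet, pfilter, Finset.mem_filter]

lemma monomial_eq_prod {α : Fin n →₀ ℕ} {c : ℝ} :
    (monomial α c : MvPolynomial (Fin n) ℝ) = C c * ∏ i, X i ^ α i := by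
  rw [monomial_eq]
  congr 1
  exact Finsupp.prod_fintype _ _ fun i => pow_zero _

lemma adeg_eq_sum {α : Fin n →₀ ℕ} : (α.sum fun _ e => e) = adeg α :=
  Finsupp.sum_fintype _ _ fun i => rfl

/-- The central decomposition: for feasible `z`, `p - p(0) + v(z)` is SOS. -/
lemma cert_main (d : ℕ) (hd2 : 2 ≤ d) (hde : Even d)
    (p : MvPolynomial (Fin n) ℝ) (hp : p.totalDegree ≤ d)
    (z : (Fin n →₀ ℕ) → Fin n → ℝ) (hz : LwFeas d p z) :
    IsSOS (p - C (eval (0 : Fin n → ℝ) p) + C (lwObj d p z)) := by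
  classical
  obtain ⟨hz1, hz2, hz3⟩ := hz
  have hd0 : d ≠ 0 := by omega
  set Δ : Finset (Fin n →₀ ℕ) := DelSet d p with hΔ
  set Ω : Finset (Fin n →₀ ℕ) := OmegaSet d p with hΩ
  have hΔΩ : Δ ⊆ Ω := fun α hα => (mem_Del.mp hα).1
  set tα : (Fin n →₀ ℕ) → ℝ := fun α =>
    ((p.coeff α / (d : ℝ)) ^ d * ∏ i, ((α i : ℝ) / z α i) ^ (α i)) ^
      ((1 : ℝ) / ((d : ℝ) - (adeg α : ℝ))) with htα
  set Tterm : (Fin n →₀ ℕ) → MvPolynomial (Fin n) ℝ := fun α =>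
    (monomial α (p.coeff α) : MvPolynomial (Fin n) ℝ)
      + ∑ i, C (z α i) * X i ^ d + C (((d : ℝ) - (adeg α : ℝ)) * tα α) with hT
  have step1 : ∀ α ∈ Δ, IsSOS (Tterm α) := by
    intro α hα
    have hαΩ : α ∈ Ω := hΔΩ hα
    obtain ⟨hsupp, hdeg, hα0, hαd⟩ := mem_Omega.mp hαΩ
    have hz0 : ∀ i, 0 ≤ z α i := fun i => (hz1 α hα i).1
    have hziff : ∀ i, z α i = 0 ↔ α i = 0 := fun i => (hz1 α hα i).2
    have hbase : 0 ≤ (p.coeff α / (d : ℝ)) ^ d * ∏ i, ((α i : ℝ) / z α i) ^ (α i) := by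
      refine mul_nonneg (hde.pow_nonneg _) (Finset.prod_nonneg fun i _ => ?_)
      exact pow_nonneg (div_nonneg (Nat.cast_nonneg _) (hz0 i)) _
    have ht : 0 ≤ tα α := Real.rpow_nonneg hbase _
    have hprodinv : (∏ i, ((α i : ℝ) / z α i) ^ (α i)) * ∏ i, (z α i / (α i : ℝ)) ^ (α i)
        = 1 := by
      rw [← Finset.prod_mul_distrib]
      refine Finset.prod_eq_one fun i _ => ?_
      rcases eq_or_ne (α i) 0 with h0 | h0
      · rw [h0]; simp
      · have hzne : z α i ≠ 0 := fun hc => h0 ((hziff i).mp hc)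
        have hαne : ((α i : ℕ) : ℝ) ≠ 0 := by exact_mod_cast h0
        rw [← mul_pow, div_mul_div_comm, mul_comm (α i : ℝ) (z α i),
          div_self (mul_ne_zero hzne hαne), one_pow]
    have heq : (p.coeff α / (d : ℝ)) ^ d
        = tα α ^ (d - adeg α) * ∏ i, (z α i / (α i : ℝ)) ^ (α i) := by
      rcases eq_or_ne (adeg α) d with hed | hed
      · rw [hed, Nat.sub_self, pow_zero, one_mul]
        exact (hz3 α hα hed).symm
      · have hlt : adeg α < d := lt_of_le_of_ne hdeg hed
        have hsub : ((d - adeg α : ℕ) : ℝ) = (d : ℝ) - (adeg α : ℝ) := by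
          push_cast [Nat.cast_sub (le_of_lt hlt)]
          ring
        have htpow : tα α ^ (d - adeg α)
            = (p.coeff α / (d : ℝ)) ^ d * ∏ i, ((α i : ℝ) / z α i) ^ (α i) := by
          rw [htα]
          simp only
          rw [show (1 : ℝ) / ((d : ℝ) - (adeg α : ℝ)) = (((d - adeg α : ℕ) : ℝ))⁻¹ by
            rw [hsub, one_div]]
          exact rpow_inv_pow hbase (by omega)
        rw [htpow, mul_assoc, hprodinv, mul_one]
    have hc := cert d (adeg α) hde hd0 (fun i => α i) rfl hdeg (p.coeff α) (tα α)
      (z α) hz0 hziff ht heq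
    rw [hT]
    simp only [monomial_eq_prod]
    exact hc
  have step2 : ∀ α ∈ Ω \ Δ, IsSOS ((monomial α (p.coeff α)) : MvPolynomial (Fin n) ℝ) := by
    intro α hα
    rw [Finset.mem_sdiff] at hα
    have h2 := hα.2
    rw [hΔ, mem_Del] at h2
    push_neg at h2
    exact sos_isSquare (h2 (by rw [← hΩ]; exact hα.1))
  have step3 : ∀ i : Fin n, IsSOS (C (p.coeff (Finsupp.single i d) - ∑ α ∈ Δ, z α i)
      * X i ^ d) := by
    intro i
    obtain ⟨mm, hmm⟩ := hde
    have hxd : (X i : MvPolynomial (Fin n) ℝ) ^ d = (X i ^ mm) ^ 2 := by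
      rw [← pow_mul]
      congr 1
      omega
    rw [hxd]
    refine sos_Cmul ?_ (sos_sq _)
    have := hz2 i
    linarith
  -- the structural decomposition of p
  have psum : p = C (p.coeff 0)
      + (∑ i, (monomial (Finsupp.single i d) (p.coeff (Finsupp.single i d))
          : MvPolynomial (Fin n) ℝ))
      + ∑ α ∈ Ω, (monomial α (p.coeff α) : MvPolynomial (Fin n) ℝ) := by
    apply MvPolynomial.ext
    intro β
    rw [coeff_add, coeff_add, coeff_C, MvPolynomial.coeff_sum, MvPolynomial.coeff_sum]
    simp only [coeff_monomial]
    by_cases hβd : ∃ i₀, β = Finsupp.single i₀ d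
    · obtain ⟨i₀, rfl⟩ := hβd
      have hne0 : (Finsupp.single i₀ d : Fin n →₀ ℕ) ≠ 0 := by
        rw [Ne, Finsupp.single_eq_zero]
        omega
      rw [if_neg (by exact fun h => hne0 h.symm)]
      have hD : ∑ i, (if Finsupp.single i d = Finsupp.single i₀ d
          then p.coeff (Finsupp.single i d) else 0) = p.coeff (Finsupp.single i₀ d) := by
        rw [Finset.sum_eq_single i₀]
        · rw [if_pos rfl]
        · intro i _ hii
          rw [if_neg]
          intro hcon
          exact hii ((Finsupp.single_left_inj hd0).mp hcon)
        · intro h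
          exact absurd (Finset.mem_univ i₀) h
      rw [hD]
      have hΩno : Finsupp.single i₀ d ∉ Ω := by
        rw [hΩ]
        intro hmem
        exact (mem_Omega.mp hmem).2.2.2 i₀ rfl
      rw [Finset.sum_ite_eq' Ω _ (fun α => p.coeff α), if_neg hΩno]
      ring
    · push_neg at hβd
      have hD : ∑ i, (if Finsupp.single i d = β
          then p.coeff (Finsupp.single i d) else 0) = 0 := by
        refine Finset.sum_eq_zero fun i _ => ?_
        rw [if_neg]
        exact fun h => hβd i h.symm
      rw [hD]
      by_cases hβ0 : β = 0
      · subst hβ0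
        rw [if_pos rfl]
        have hΩno : (0 : Fin n →₀ ℕ) ∉ Ω := by
          rw [hΩ]
          intro hmem
          exact (mem_Omega.mp hmem).2.2.1 rfl
        rw [Finset.sum_ite_eq' Ω _ (fun α => p.coeff α), if_neg hΩno]
        ring
      · rw [if_neg (fun h => hβ0 h.symm)]
        rw [Finset.sum_ite_eq' Ω _ (fun α => p.coeff α)]
        by_cases hin : β ∈ p.support
        · have hβΩ : β ∈ Ω := by
            rw [hΩ]
            refine mem_Omega.mpr ⟨hin, ?_, hβ0, fun i h => hβd i h⟩
            calc adeg β = β.sum fun _ e => e := adeg_eq_sum.symm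
              _ ≤ p.totalDegree := MvPolynomial.le_totalDegree hin
              _ ≤ d := hp
          rw [if_pos hβΩ]
          ring
        · have hco : p.coeff β = 0 := by
            rwa [← MvPolynomial.notMem_support_iff]
          rw [hco]
          split <;> ring
  have heval : eval (0 : Fin n → ℝ) p = p.coeff 0 := by
    rw [eval_zero, constantCoeff_eq]
  have hTsum : ∑ α ∈ Δ, Tterm α
      = (∑ α ∈ Δ, (monomial α (p.coeff α) : MvPolynomial (Fin n) ℝ))
        + (∑ α ∈ Δ, ∑ i, C (z α i) * X i ^ d)
        + ∑ α ∈ Δ, C (((d : ℝ) - (adeg α : ℝ)) * tα α) := by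
    simp only [hT]
    rw [Finset.sum_add_distrib, Finset.sum_add_distrib]
  have hconstsum : ∑ α ∈ Δ, C (((d : ℝ) - (adeg α : ℝ)) * tα α)
      = (C (lwObj d p z) : MvPolynomial (Fin n) ℝ) := by
    rw [← map_sum]
    congr 1
    have hunf : lwObj d p z
        = ∑ α ∈ pfilter Δ (fun α => adeg α < d), ((d : ℝ) - (adeg α : ℝ)) * tα α := by
      unfold lwObj
      simp only [htα]
      rfl
    rw [hunf]
    have hsub : pfilter Δ (fun α => adeg α < d) ⊆ Δ :=
      fun α hα => (mem_pfilter.mp hα).1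
    refine (Finset.sum_subset hsub fun α hα hnm => ?_).symm
    have hnlt : ¬ adeg α < d := by
      intro hlt
      exact hnm (mem_pfilter.mpr ⟨hα, hlt⟩)
    have hαΩ := hΔΩ hα
    have hdeg := (mem_Omega.mp (by rw [← hΩ]; exact hαΩ)).2.1
    have hed : adeg α = d := by omega
    rw [hed, sub_self, zero_mul]
  have hdiagsum : ∑ i, C (p.coeff (Finsupp.single i d) - ∑ α ∈ Δ, z α i) * X i ^ d
      = (∑ i, (monomial (Finsupp.single i d) (p.coeff (Finsupp.single i d))
          : MvPolynomial (Fin n) ℝ))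
        - ∑ α ∈ Δ, ∑ i, C (z α i) * X i ^ d := by
    rw [Finset.sum_comm (s := Δ) (t := Finset.univ), ← Finset.sum_sub_distrib]
    refine Finset.sum_congr rfl fun i _ => ?_
    rw [map_sub, sub_mul, map_sum, Finset.sum_mul]
    congr 1
    rw [X_pow_eq_monomial, C_mul_monomial, mul_one]
  have keyid : p - C (eval (0 : Fin n → ℝ) p) + C (lwObj d p z)
      = (∑ α ∈ Δ, Tterm α) + (∑ α ∈ Ω \ Δ, (monomial α (p.coeff α)
          : MvPolynomial (Fin n) ℝ))
        + ∑ i, C (p.coeff (Finsupp.single i d) - ∑ α ∈ Δ, z α i) * X i ^ d := by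
    have hsd := Finset.sum_sdiff (f := fun α => (monomial α (p.coeff α)
      : MvPolynomial (Fin n) ℝ)) hΔΩ
    rw [hTsum, hconstsum, hdiagsum, heval]
    linear_combination psum - hsd
  rw [keyid]
  exact sos_add (sos_add (sos_sum _ _ step1) (sos_sum _ _ step2)) (sos_sum _ _ fun i _ => step3 i)

end SOSAux


/-- `f_sos^{(d)} := sup{r : f − r = σ₀ + ∑ σⱼ gⱼ, σⱼ SOS, deg σ₀ ≤ d, deg(σⱼ gⱼ) ≤ d}`. -/
def fsos {n m : ℕ} (d : ℕ) (f : MvPolynomial (Fin n) ℝ)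
    (g : Fin m → MvPolynomial (Fin n) ℝ) : EReal :=
  sSup ((fun r : ℝ => (r : EReal)) '' {r | ∃ σ₀ : MvPolynomial (Fin n) ℝ,
    ∃ σ : Fin m → MvPolynomial (Fin n) ℝ, IsSOS σ₀ ∧ (∀ j, IsSOS (σ j)) ∧
    σ₀.totalDegree ≤ d ∧ (∀ j, (σ j * g j).totalDegree ≤ d) ∧
    f - C r = σ₀ + ∑ j, σ j * g j})

/-- For each `λ ∈ [0,∞)^m` and feasible `z` for `G(λ)` there is an SOS certificate of degree `≤ d`
for `f − (G(λ)(0) − v(z))`; consequently `G(λ)_gp ≤ f_sos^{(d)}` and `s(f,g) ≤ f_sos^{(d)}`. -/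
theorem stmt2 {n m : ℕ} (hn : 1 ≤ n) (d : ℕ)
    (f : MvPolynomial (Fin n) ℝ) (g : Fin m → MvPolynomial (Fin n) ℝ)
    (hd2 : 2 ≤ d) (hde : Even d) (hdf : f.totalDegree ≤ d)
    (hdg : ∀ j, (g j).totalDegree ≤ d)
    (hdLeast : ∀ d' : ℕ, Even d' → 2 ≤ d' → f.totalDegree ≤ d' →
      (∀ j, (g j).totalDegree ≤ d') → d ≤ d') :
    (∀ lam : Fin m → ℝ, (∀ j, 0 ≤ lam j) →
      ∀ z, LwFeas d (polyG f g lam) z →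
      ∃ σ₀ : MvPolynomial (Fin n) ℝ, ∃ σ : Fin m → MvPolynomial (Fin n) ℝ,
        IsSOS σ₀ ∧ (∀ j, IsSOS (σ j)) ∧
        σ₀.totalDegree ≤ d ∧ (∀ j, (σ j * g j).totalDegree ≤ d) ∧
        f - C (eval (0 : Fin n → ℝ) (polyG f g lam) - lwObj d (polyG f g lam) z) =
          σ₀ + ∑ j, σ j * g j) ∧
    (∀ lam : Fin m → ℝ, (∀ j, 0 ≤ lam j) → lwGp d (polyG f g lam) ≤ fsos d f g) ∧
    sBound d f g ≤ fsos d f g := by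
  have hGdeg : ∀ lam : Fin m → ℝ, (polyG f g lam).totalDegree ≤ d := by
    intro lam
    unfold polyG
    rw [sub_eq_add_neg]
    refine le_trans (totalDegree_add _ _) (max_le hdf ?_)
    rw [totalDegree_neg]
    refine le_trans (totalDegree_finset_sum _ _) (Finset.sup_le fun j _ => ?_)
    refine le_trans (totalDegree_mul _ _) ?_
    rw [totalDegree_C, zero_add]
    exact hdg j
  have hpart1 : ∀ lam : Fin m → ℝ, (∀ j, 0 ≤ lam j) →
      ∀ z, LwFeas d (polyG f g lam) z →
      ∃ σ₀ : MvPolynomial (Fin n) ℝ, ∃ σ : Fin m → MvPolynomial (Fin n) ℝ,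
        IsSOS σ₀ ∧ (∀ j, IsSOS (σ j)) ∧
        σ₀.totalDegree ≤ d ∧ (∀ j, (σ j * g j).totalDegree ≤ d) ∧
        f - C (eval (0 : Fin n → ℝ) (polyG f g lam) - lwObj d (polyG f g lam) z) =
          σ₀ + ∑ j, σ j * g j := by
    intro lam hlam z hz
    set p := polyG f g lam with hpdef
    have hsos := SOSAux.cert_main d hd2 hde p (hGdeg lam) z hz
    refine ⟨p - C (eval (0 : Fin n → ℝ) p - lwObj d p z), fun j => C (lam j),
      ?_, ?_, ?_, ?_, ?_⟩
    · have hrw : p - C (eval (0 : Fin n → ℝ) p - lwObj d p z)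
          = p - C (eval (0 : Fin n → ℝ) p) + C (lwObj d p z) := by
        rw [map_sub]
        ring
      rw [hrw]
      exact hsos
    · exact fun j => SOSAux.sos_C (hlam j)
    · rw [sub_eq_add_neg]
      refine le_trans (totalDegree_add _ _) (max_le (hGdeg lam) ?_)
      rw [totalDegree_neg, totalDegree_C]
      omega
    · intro j
      refine le_trans (totalDegree_mul _ _) ?_
      rw [totalDegree_C, zero_add]
      exact hdg j
    · rw [hpdef]
      unfold polyG
      ring
  have hpart2 : ∀ lam : Fin m → ℝ, (∀ j, 0 ≤ lam j) →
      lwGp d (polyG f g lam) ≤ fsos d f g := by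
    intro lam hlam
    set p := polyG f g lam with hpdef
    by_cases hfe : {z | LwFeas d p z}.Nonempty
    · obtain ⟨z₀, hz₀⟩ := hfe
      have hmem : ∀ z, LwFeas d p z →
          ((eval (0 : Fin n → ℝ) p - lwObj d p z : ℝ) : EReal) ≤ fsos d f g := by
        intro z hz
        obtain ⟨σ₀, σ, h1, h2, h3, h4, h5⟩ := hpart1 lam hlam z hz
        exact le_sSup ⟨_, ⟨σ₀, σ, h1, h2, h3, h4, h5⟩, rfl⟩
      by_cases htop : fsos d f g = ⊤
      · rw [htop]; exact le_top
      have hbot : fsos d f g ≠ ⊥ := by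
        intro hb
        have hc := hmem z₀ hz₀
        rw [hb, le_bot_iff] at hc
        exact (EReal.coe_ne_bot _) hc
      obtain ⟨s, hs⟩ : ∃ s : ℝ, fsos d f g = (s : EReal) :=
        ⟨(fsos d f g).toReal, (EReal.coe_toReal htop hbot).symm⟩
      have hInf : ((eval (0 : Fin n → ℝ) p - s : ℝ) : EReal) ≤ lwRho d p := by
        unfold lwRho
        refine le_sInf ?_
        rintro x ⟨z, hz, rfl⟩
        have hc := hmem z hz
        rw [hs] at hc
        have hr : eval (0 : Fin n → ℝ) p - lwObj d p z ≤ s := EReal.coe_le_coe_iff.mp hc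
        have hr2 : eval (0 : Fin n → ℝ) p - s ≤ lwObj d p z := by linarith
        exact EReal.coe_le_coe_iff.mpr hr2
      unfold lwGp
      rw [hs]
      calc ((eval (0 : Fin n → ℝ) p : ℝ) : EReal) - lwRho d p
          ≤ ((eval (0 : Fin n → ℝ) p : ℝ) : EReal)
            - ((eval (0 : Fin n → ℝ) p - s : ℝ) : EReal) :=
            EReal.sub_le_sub (le_refl _) hInf
        _ = ((s : ℝ) : EReal) := by
            rw [← EReal.coe_sub]
            congr 1
            ring
    · unfold lwGp lwRho
      rw [Set.not_nonempty_iff_eq_empty.mp hfe, Set.image_empty, sInf_empty,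
        EReal.sub_top]
      exact bot_le
  refine ⟨hpart1, hpart2, ?_⟩
  unfold sBound
  refine sSup_le ?_
  rintro x ⟨lam, hlam, rfl⟩
  exact hpart2 lam hlam
end
end

section
/- Set g₀ := −f and assume (*): for each i = 1,…,n there exists j_i with 0 ≤ j_i ≤ m such that (g_{j_i})_{d,i} < 0 and (g_j)_{d,i} = 0 for all j > j_i. Then there exists a real matrix A = (a_{jk})_{j,k=0,…,m} with a_{jj} = 1 for all j, a_{jk} = 0 for k > j, and a_{jk} ≤ 0 for k < j (in particular a_{00} = 1 and a_{0k} = 0 for k ≠ 0) such that, with h_k := ∑_{j=0}^m a_{jk} g_j, for each i = 1,…,n one has: (h_{j_i})_{d,i} = (g_{j_i})_{d,i} < 0, (h_k)_{d,i} ≥ 0 for k < j_i, and (h_k)_{d,i} = 0 for k > j_i. In particular, for each i = 1,…,n exactly one of (h₀)_{d,i},…,(h_m)_{d,i} is strictly negative. -/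
open MvPolynomial Finset

noncomputable section

/-- `h_k := ∑_{j=0}^m a_{jk} g_j`. -/
def hpoly {n m : ℕ} (gext : Fin (m+1) → MvPolynomial (Fin n) ℝ)
    (A : Fin (m+1) → Fin (m+1) → ℝ) (k : Fin (m+1)) : MvPolynomial (Fin n) ℝ :=
  ∑ j, C (A j k) * gext j


private def Sfun (B : ℝ) (e : ℕ → ℝ) : ℕ → ℝ
  | 0 => 1
  | (t+1) => Sfun B e t * (1 + B / e t)

private lemma Sfun_one_le {B : ℝ} {e : ℕ → ℝ} (hB : 0 < B) (he : ∀ u, 0 < e u) :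
    ∀ u, 1 ≤ Sfun B e u := by
  intro u
  induction u with
  | zero => simp [Sfun]
  | succ t ih =>
    have h2 : (0:ℝ) < B / e t := div_pos hB (he t)
    have h : (1:ℝ) * 1 ≤ Sfun B e t * (1 + B / e t) :=
      mul_le_mul ih (by linarith) (by norm_num) (by linarith)
    simpa [Sfun] using h

private lemma Sfun_sum {B : ℝ} {e : ℕ → ℝ} (he : ∀ u, e u ≠ 0) (u : ℕ) :
    ∑ j ∈ Finset.range u, B * Sfun B e j / e j = Sfun B e u - 1 := by
  induction u with
  | zero => simp [Sfun]
  | succ t ih =>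
    rw [Finset.sum_range_succ, ih]
    have h := he t
    show Sfun B e t - 1 + B * Sfun B e t / e t = Sfun B e t * (1 + B / e t) - 1
    field_simp
    ring
/-- Theorem (important special case, part 1): under (*) there is a canonically defined lower
triangular matrix `A` with unit diagonal and nonpositive entries below the diagonal such that,
for each `i`, `(h_{j_i})_{d,i} = (g_{j_i})_{d,i} < 0`, `(h_k)_{d,i} ≥ 0` for `k < j_i`, and
`(h_k)_{d,i} = 0` for `k > j_i`; in particular exactly one of `(h₀)_{d,i}, …, (h_m)_{d,i}`
is strictly negative. -/
theorem stmt6 {n m : ℕ} (hn : 1 ≤ n) (d : ℕ)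
    (f : MvPolynomial (Fin n) ℝ) (g : Fin m → MvPolynomial (Fin n) ℝ)
    (hd2 : 2 ≤ d) (hde : Even d) (hdf : f.totalDegree ≤ d)
    (hdg : ∀ j, (g j).totalDegree ≤ d)
    (hdLeast : ∀ d' : ℕ, Even d' → 2 ≤ d' → f.totalDegree ≤ d' →
      (∀ j, (g j).totalDegree ≤ d') → d ≤ d')
    (gext : Fin (m+1) → MvPolynomial (Fin n) ℝ) (hgext : gext = Fin.cons (-f) g)
    (hstar : ∀ i : Fin n, ∃ j : Fin (m+1),
      (gext j).coeff (Finsupp.single i d) < 0 ∧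
      ∀ j', j < j' → (gext j').coeff (Finsupp.single i d) = 0) :
    ∃ A : Fin (m+1) → Fin (m+1) → ℝ,
      (∀ j, A j j = 1) ∧ (∀ j k, j < k → A j k = 0) ∧ (∀ j k, k < j → A j k ≤ 0) ∧
      (∀ i : Fin n, ∀ ji : Fin (m+1),
        ((gext ji).coeff (Finsupp.single i d) < 0 ∧
          ∀ j', ji < j' → (gext j').coeff (Finsupp.single i d) = 0) →
        (hpoly gext A ji).coeff (Finsupp.single i d) =
            (gext ji).coeff (Finsupp.single i d) ∧
        (hpoly gext A ji).coeff (Finsupp.single i d) < 0 ∧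
        (∀ k, k < ji → 0 ≤ (hpoly gext A k).coeff (Finsupp.single i d)) ∧
        (∀ k, ji < k → (hpoly gext A k).coeff (Finsupp.single i d) = 0)) ∧
      (∀ i : Fin n, ∃! k : Fin (m+1),
        (hpoly gext A k).coeff (Finsupp.single i d) < 0) := by
  classical
  -- abbreviations
  let q : Fin (m+1) → Fin n → ℝ := fun j i => (gext j).coeff (Finsupp.single i d)
  have hqdef : ∀ j i, q j i = (gext j).coeff (Finsupp.single i d) := fun _ _ => rfl
  let B : ℝ := 1 + ∑ j : Fin (m+1), ∑ i : Fin n, |q j i|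
  have hBdef : B = 1 + ∑ j : Fin (m+1), ∑ i : Fin n, |q j i| := rfl
  have hsum_nonneg : (0:ℝ) ≤ ∑ j : Fin (m+1), ∑ i : Fin n, |q j i| := by positivity
  have hB1 : 1 ≤ B := by rw [hBdef]; linarith
  have hB0 : (0:ℝ) < B := by linarith
  have hqB : ∀ j i, |q j i| ≤ B - 1 := by
    intro j i
    have h1 : |q j i| ≤ ∑ i', |q j i'| :=
      Finset.single_le_sum (f := fun i' => |q j i'|) (fun _ _ => abs_nonneg _) (mem_univ i)
    have h2 : ∑ i', |q j i'| ≤ ∑ j' : Fin (m+1), ∑ i', |q j' i'| :=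
      Finset.single_le_sum (f := fun j' => ∑ i', |q j' i'|)
        (fun j' _ => Finset.sum_nonneg fun _ _ => abs_nonneg _) (mem_univ j)
    rw [hBdef]; linarith
  -- the sets I_t and the minima ε
  let It : Fin (m+1) → Finset (Fin n) := fun t =>
    Finset.univ.filter (fun i => q t i < 0 ∧ ∀ j', t < j' → q j' i = 0)
  let εF : Fin (m+1) → ℝ := fun t =>
    if h : (It t).Nonempty then (It t).inf' h (fun i => -q t i) else 1
  let e : ℕ → ℝ := fun u => if h : u < m+1 then εF ⟨u, h⟩ else 1
  have hεF_pos : ∀ t, 0 < εF t := by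
    intro t
    by_cases h : (It t).Nonempty
    · show 0 < if h : (It t).Nonempty then (It t).inf' h (fun i => -q t i) else 1
      rw [dif_pos h]
      obtain ⟨i, hi, hval⟩ := Finset.exists_mem_eq_inf' h (fun i => -q t i)
      rw [hval]
      have := (Finset.mem_filter.mp hi).2.1
      linarith
    · show 0 < if h : (It t).Nonempty then (It t).inf' h (fun i => -q t i) else 1
      rw [dif_neg h]; norm_num
  have he_pos : ∀ u, 0 < e u := by
    intro u
    show 0 < if h : u < m+1 then εF ⟨u, h⟩ else 1
    by_cases h : u < m+1
    · rw [dif_pos h]; exact hεF_pos _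
    · rw [dif_neg h]; norm_num
  have he_ne : ∀ u, e u ≠ 0 := fun u => (he_pos u).ne'
  have hεle : ∀ (t : Fin (m+1)) (i : Fin n), q t i < 0 →
      (∀ j', t < j' → q j' i = 0) → e t.val ≤ -q t i := by
    intro t i h1 h2
    have hi : i ∈ It t := Finset.mem_filter.mpr ⟨mem_univ i, h1, h2⟩
    have hne : (It t).Nonempty := ⟨i, hi⟩
    have he1 : e t.val = εF t := by
      show (if h : t.val < m+1 then εF ⟨t.val, h⟩ else 1) = εF t
      rw [dif_pos t.isLt, Fin.eta]
    rw [he1]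
    show (if h : (It t).Nonempty then (It t).inf' h (fun i => -q t i) else 1) ≤ -q t i
    rw [dif_pos hne]
    exact Finset.inf'_le _ hi
  -- the recursive constants
  let S : ℕ → ℝ := Sfun B e
  let cN : ℕ → ℝ := fun u => B * S u / e u
  have hS1 : ∀ u, 1 ≤ S u := Sfun_one_le hB0 he_pos
  have hc_nonneg : ∀ u, 0 ≤ cN u := by
    intro u
    have h1 := hS1 u
    have h2 := he_pos u
    have : (0:ℝ) ≤ B * S u := by nlinarith
    exact div_nonneg this (le_of_lt h2)
  have hcε : ∀ u, cN u * e u = B * S u := fun u => div_mul_cancel₀ _ (he_ne u)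
  have hsumc : ∀ u, ∑ j ∈ Finset.range u, cN j = S u - 1 := fun u => Sfun_sum he_ne u
  -- the matrix
  let A : Fin (m+1) → Fin (m+1) → ℝ := fun j k =>
    if j = k then 1 else if k < j then -(cN j.val) else 0
  have hAdef : ∀ j k, A j k = if j = k then 1 else if k < j then -(cN j.val) else 0 :=
    fun _ _ => rfl
  have hAdiag : ∀ j, A j j = 1 := by intro j; rw [hAdef, if_pos rfl]
  have hAupper : ∀ j k, j < k → A j k = 0 := by
    intro j k h
    rw [hAdef, if_neg (ne_of_lt h), if_neg (not_lt_of_gt h)]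
  have hAlower : ∀ j k, k < j → A j k = -(cN j.val) := by
    intro j k h
    rw [hAdef, if_neg (ne_of_gt h), if_pos h]
  have hcoeff : ∀ (k : Fin (m+1)) (i : Fin n),
      (hpoly gext A k).coeff (Finsupp.single i d) = ∑ j, A j k * q j i := by
    intro k i
    show (∑ j, MvPolynomial.C (A j k) * gext j).coeff (Finsupp.single i d) = _
    rw [MvPolynomial.coeff_sum]
    exact Finset.sum_congr rfl fun j _ => by rw [MvPolynomial.coeff_C_mul]
  -- main lemma
  have main : ∀ (i : Fin n) (t : Fin (m+1)),
      q t i < 0 → (∀ j', t < j' → q j' i = 0) →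
      (hpoly gext A t).coeff (Finsupp.single i d) = q t i ∧
      (∀ k, k < t → 0 ≤ (hpoly gext A k).coeff (Finsupp.single i d)) ∧
      (∀ k, t < k → (hpoly gext A k).coeff (Finsupp.single i d) = 0) := by
    intro i t h1 h2
    refine ⟨?_, ?_, ?_⟩
    · rw [hcoeff]
      rw [Finset.sum_eq_single t]
      · rw [hAdiag, one_mul]
      · intro j _ hj
        rcases lt_or_gt_of_ne hj with h | h
        · rw [hAupper j t h, zero_mul]
        · rw [h2 j h, mul_zero]
      · intro h; exact absurd (mem_univ t) h
    · -- the estimate for k < t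
      intro k hk
      rw [hcoeff]
      have hkt : k ≠ t := ne_of_lt hk
      set F : Fin (m+1) → ℝ := fun j => A j k * q j i with hF
      set b : Fin (m+1) → ℝ := fun j =>
        if j = t then B * S t.val else if j = k then -(B-1)
        else if k < j ∧ j < t then -(B * cN j.val) else 0 with hbdef
      have hbF : ∀ j, b j ≤ F j := by
        intro j
        by_cases hjt : j = t
        · subst hjt
          have hbj : b j = B * S j.val := by rw [hbdef]; simp
          have hFj : F j = -(cN j.val) * q j i := by
            rw [hF]; simp only []; rw [hAlower j k hk]
          rw [hbj, hFj]
          have hle : e j.val ≤ -q j i := hεle j i h1 h2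
          have hcn := hc_nonneg j.val
          calc B * S j.val = cN j.val * e j.val := (hcε _).symm
            _ ≤ cN j.val * (-q j i) := mul_le_mul_of_nonneg_left hle hcn
            _ = -(cN j.val) * q j i := by ring
        · by_cases hjk : j = k
          · subst hjk
            have hbj : b j = -(B-1) := by rw [hbdef]; simp [hjt]
            have hFj : F j = q j i := by rw [hF]; simp only []; rw [hAdiag, one_mul]
            rw [hbj, hFj]
            have := (abs_le.mp (hqB j i)).1
            linarith
          · by_cases hcase : k < j ∧ j < t
            · have hbj : b j = -(B * cN j.val) := by rw [hbdef]; simp [hjt, hjk, hcase]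
              have hFj : F j = -(cN j.val) * q j i := by
                rw [hF]; simp only []; rw [hAlower j k hcase.1]
              rw [hbj, hFj]
              have hq1 : q j i ≤ B := by
                have := (abs_le.mp (hqB j i)).2; linarith
              have hcn := hc_nonneg j.val
              nlinarith
            · have hbj : b j = 0 := by rw [hbdef]; simp [hjt, hjk, hcase]
              rw [hbj]
              by_cases hkj : k < j
              · have hjt' : t < j := by
                  rcases lt_trichotomy j t with h | h | h
                  · exact absurd ⟨hkj, h⟩ hcase
                  · exact absurd h hjt
                  · exact h
                have hFj : F j = 0 := by
                  rw [hF]; simp only []; rw [h2 j hjt', mul_zero]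
                rw [hFj]
              · have hjk' : j < k := lt_of_le_of_ne (not_lt.mp hkj) hjk
                have hFj : F j = 0 := by
                  rw [hF]; simp only []; rw [hAupper j k hjk', zero_mul]
                rw [hFj]
      -- the sum over b
      have hrem := ((Finset.univ.erase t).erase k)
      have hkmem : k ∈ Finset.univ.erase t := Finset.mem_erase.mpr ⟨hkt, mem_univ k⟩
      have e1 : ∑ j, b j = b t + ∑ j ∈ Finset.univ.erase t, b j :=
        (Finset.add_sum_erase _ _ (mem_univ t)).symm
      have e2 : ∑ j ∈ Finset.univ.erase t, b j
          = b k + ∑ j ∈ (Finset.univ.erase t).erase k, b j :=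
        (Finset.add_sum_erase _ _ hkmem).symm
      -- lower bound the remaining sum by ∑ gfun
      set gfun : Fin (m+1) → ℝ := fun j => if j.val < t.val then -(B * cN j.val) else 0
        with hgdef
      have hg_nonpos : ∀ j, gfun j ≤ 0 := by
        intro j
        rw [hgdef]
        by_cases h : j.val < t.val
        · simp only [if_pos h]
          have := hc_nonneg j.val
          nlinarith
        · simp only [if_neg h]; exact le_refl 0
      have h3 : ∀ j ∈ (Finset.univ.erase t).erase k, gfun j ≤ b j := by
        intro j hj
        have hjk : j ≠ k := (Finset.mem_erase.mp hj).1
        have hjt : j ≠ t := (Finset.mem_erase.mp (Finset.mem_erase.mp hj).2).1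
        by_cases hcase : k < j ∧ j < t
        · have : j.val < t.val := hcase.2
          have hbj : b j = -(B * cN j.val) := by rw [hbdef]; simp [hjt, hjk, hcase]
          have hgj : gfun j = -(B * cN j.val) := by rw [hgdef]; simp [this]
          rw [hbj, hgj]
        · have hbj : b j = 0 := by rw [hbdef]; simp [hjt, hjk, hcase]
          rw [hbj]; exact hg_nonpos j
      have h4 : ∑ j ∈ (Finset.univ.erase t).erase k, gfun j
          ≤ ∑ j ∈ (Finset.univ.erase t).erase k, b j := Finset.sum_le_sum h3
      have h5 : ∑ j, gfun j ≤ ∑ j ∈ (Finset.univ.erase t).erase k, gfun j := by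
        have e1' : ∑ j, gfun j = gfun t + ∑ j ∈ Finset.univ.erase t, gfun j :=
          (Finset.add_sum_erase _ _ (mem_univ t)).symm
        have e2' : ∑ j ∈ Finset.univ.erase t, gfun j
            = gfun k + ∑ j ∈ (Finset.univ.erase t).erase k, gfun j :=
          (Finset.add_sum_erase _ _ hkmem).symm
        have := hg_nonpos t
        have := hg_nonpos k
        linarith [e1', e2']
      have h6 : ∑ j, gfun j = -(B * (S t.val - 1)) := by
        have e3 : ∑ j : Fin (m+1), gfun j
            = ∑ u ∈ Finset.range (m+1), (if u < t.val then -(B * cN u) else 0) := by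
          rw [← Fin.sum_univ_eq_sum_range (fun u => if u < t.val then -(B * cN u) else 0)]
        rw [e3]
        have hsub : Finset.range t.val ⊆ Finset.range (m+1) :=
          Finset.range_subset_range.mpr (le_of_lt t.isLt)
        rw [← Finset.sum_subset hsub (fun x _ hx => by
          rw [if_neg (by simpa using hx)])]
        rw [Finset.sum_congr rfl (fun x hx => if_pos (Finset.mem_range.mp hx))]
        rw [Finset.sum_neg_distrib, ← Finset.mul_sum, hsumc]
      have hbt : b t = B * S t.val := by rw [hbdef]; simp
      have hbk : b k = -(B-1) := by rw [hbdef]; simp [hkt]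
      have hsb : 0 ≤ ∑ j, b j := by
        have hS := hS1 t.val
        rw [e1, e2, hbt, hbk]
        have : -(B * (S t.val - 1)) ≤ ∑ j ∈ (Finset.univ.erase t).erase k, b j := by
          calc -(B * (S t.val - 1)) = ∑ j, gfun j := h6.symm
            _ ≤ _ := le_trans h5 h4
        nlinarith
      calc (0:ℝ) ≤ ∑ j, b j := hsb
        _ ≤ ∑ j, F j := Finset.sum_le_sum (fun j _ => hbF j)
    · -- k > t : coefficient is zero
      intro k hkgt
      rw [hcoeff]
      apply Finset.sum_eq_zero
      intro j _
      by_cases hjk : j = k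
      · subst hjk
        rw [h2 j hkgt, mul_zero]
      · rcases lt_or_gt_of_ne hjk with h | h
        · rw [hAupper j k h, zero_mul]
        · rw [h2 j (lt_trans hkgt h), mul_zero]
  refine ⟨A, hAdiag, hAupper, fun j k h => by rw [hAlower j k h]; simp [hc_nonneg], ?_, ?_⟩
  · intro i ji ⟨h1, h2⟩
    obtain ⟨ha, hb, hc⟩ := main i ji h1 h2
    exact ⟨ha, by rw [ha]; exact h1, hb, hc⟩
  · intro i
    obtain ⟨t, h1, h2⟩ := hstar i
    obtain ⟨ha, hb, hc⟩ := main i t h1 h2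
    refine ⟨t, by simpa [ha] using h1, ?_⟩
    intro k hk
    rcases lt_trichotomy k t with h | h | h
    · exact absurd hk (not_lt.mpr (hb k h))
    · exact h
    · rw [hc k h] at hk; exact absurd hk (lt_irrefl 0)
end
end
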